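/- arXiv:1911.07458 — 5 statements merged into one kernel-verified Lean document; each statement's English description precedes it below -/
import Mathlib

section
/- Let f(X) = ∑_{k≥1} (f_k/k!) X^k and g(X) = ∑_{k≥1} (g_k/k!) X^k be formal power series over a commutative ring with zero constant term. Then the n-th coefficient (with n ≥ 1) of the composition f ∘ g satisfies (f∘g)_n = ∑_{π ∈ P_n} f_{|π|} · ∏_{Γ ∈ π} g_{|Γ|}, where P_n is the set of set partitions of {1,…,n}. -/
open scoped Classical

/-- Composition of formal power series: `(pcomp F G)` is `∑ₖ (coeff k F) • G^k`, which is a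
well-defined power series when `G` has zero constant term, since then the coefficient of `Xⁿ`
only receives contributions from `k ≤ n`. -/
noncomputable def pcomp {K : Type*} [CommRing K] (F G : PowerSeries K) : PowerSeries K :=
  PowerSeries.mk fun n =>
    ∑ k ∈ Finset.range (n + 1), PowerSeries.coeff k F * PowerSeries.coeff n (G ^ k)

namespace FaaAux

open Finset

variable {K : Type*} [CommRing K]

/-- The fiber of `σ` over `i`. -/
noncomputable def fib {β : Type*} [Fintype β] {k : ℕ} (σ : β → Fin k) (i : Fin k) : Finset β :=
  Finset.univ.filter fun x => σ x = i

/-- `S g k β = ∑_{σ : β → Fin k} ∏_i g |σ⁻¹ i|`. -/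
noncomputable def S (g : ℕ → K) (k : ℕ) (β : Type*) [Fintype β] [DecidableEq β] : K :=
  ∑ σ : β → Fin k, ∏ i : Fin k, g (fib σ i).card

lemma fib_comp {β γ : Type*} [Fintype β] [Fintype γ] {k : ℕ} (e : γ ≃ β) (σ : β → Fin k)
    (i : Fin k) : (fib (σ ∘ e) i).card = (fib σ i).card := by
  apply Finset.card_bij (fun a _ => e a)
  · intro a ha
    simp only [fib, mem_filter, mem_univ, true_and, Function.comp] at ha ⊢
    exact ha
  · intro a _ b _ h
    exact e.injective h
  · intro b hb
    refine ⟨e.symm b, ?_, by simp⟩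
    simp only [fib, mem_filter, mem_univ, true_and, Function.comp] at hb ⊢
    simpa using hb

lemma S_equiv {β γ : Type*} [Fintype β] [Fintype γ] [DecidableEq β] [DecidableEq γ] (g : ℕ → K) (k : ℕ) (e : β ≃ γ) :
    S g k β = S g k γ := by
  unfold S
  apply Fintype.sum_bijective (fun σ : β → Fin k => σ ∘ e.symm)
    (Equiv.arrowCongr e (Equiv.refl _)).bijective
  intro σ
  exact Finset.prod_congr rfl fun i _ => by rw [fib_comp e.symm]

lemma S_zero (g : ℕ → K) (n : ℕ) : S g 0 (Fin n) = if n = 0 then 1 else 0 := by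
  rcases n with _ | n
  · simp [S]
  · simp [S]

lemma S_rec {β : Type*} [Fintype β] [DecidableEq β] (g : ℕ → K) (k : ℕ) :
    S g (k + 1) β = ∑ A ∈ (Finset.univ : Finset β).powerset, g A.card * S g k ↥(Aᶜ) := by
  classical
  have hmaps : ∀ τ : β → Fin (k + 1), τ ∈ (Finset.univ : Finset (β → Fin (k + 1))) →
      fib τ (Fin.last k) ∈ (Finset.univ : Finset β).powerset := fun τ _ =>
    mem_powerset.2 (subset_univ _)
  rw [S, ← Finset.sum_fiberwise_of_maps_to hmaps]
  apply Finset.sum_congr rfl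
  intro A _
  rw [S, Finset.mul_sum]
  refine Finset.sum_bij' (i := fun τ hτ => fun x : ↥(Aᶜ) =>
      Fin.castPred (τ x.1) ?_) (j := fun σ _ => fun x : β =>
      if h : x ∈ A then Fin.last k else Fin.castSucc (σ ⟨x, by simp [h]⟩))
      ?_ ?_ ?_ ?_ ?_
  · -- τ x.1 ≠ last
    have hx := x.2
    simp only [Finset.mem_compl] at hx
    simp only [Finset.mem_filter] at hτ
    intro hcontra
    have hmem : x.1 ∈ fib τ (Fin.last k) := by simp [fib, hcontra]
    exact hx (hτ.2 ▸ hmem)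
  · intro τ hτ
    exact mem_univ _
  · -- j maps into the fiber over A
    intro σ _
    simp only [Finset.mem_filter, mem_univ, true_and]
    ext x
    simp only [fib, mem_filter, mem_univ, true_and]
    by_cases h : x ∈ A
    · simp [h]
    · simp only [h, dite_false, iff_false]
      exact fun hc => absurd hc (Fin.ne_last_of_lt (Fin.castSucc_lt_last _))
  · -- left inverse
    intro τ hτ
    simp only [Finset.mem_filter] at hτ
    funext x
    by_cases h : x ∈ A
    · have : τ x = Fin.last k := by
        rw [← hτ.2] at h
        simpa [fib] using h
      simp [h, this]
    · simp [h, Fin.castSucc_castPred]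
  · -- right inverse
    intro σ _
    funext x
    have hx := x.2
    simp only [Finset.mem_compl] at hx
    have : (fun y : β => if h : y ∈ A then Fin.last k else
        Fin.castSucc (σ ⟨y, by simp [h]⟩)) x.1 = Fin.castSucc (σ x) := by
      simp only [hx, dite_false]
    simp only [this, Fin.castPred_castSucc]
  · -- summands agree
    intro τ hτ
    simp only [Finset.mem_filter] at hτ
    rw [Fin.prod_univ_castSucc]
    rw [show g (fib τ (Fin.last k)).card = g A.card by rw [hτ.2], mul_comm]
    congr 1
    apply Finset.prod_congr rfl
    intro i _
    congr 1
    apply Finset.card_bij (fun (x : β) hx => (⟨x, ?_⟩ : ↥(Aᶜ)))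
    · -- membership in fiber of restriction
      intro x hx
      simp only [fib, mem_filter, mem_univ, true_and] at hx ⊢
      simp [hx]
    · intro a _ b _ h
      exact Subtype.mk_eq_mk.1 h
    · intro b hb
      refine ⟨b.1, ?_, by simp⟩
      simp only [fib, mem_filter, mem_univ, true_and] at hb ⊢
      rw [← hb, Fin.castSucc_castPred]
    · -- the deferred goal : x ∈ Aᶜ
      simp only [fib, mem_filter, mem_univ, true_and] at hx
      simp only [Finset.mem_compl, ← hτ.2]
      simp [fib, hx]

lemma S_rec_fin (g : ℕ → K) (k n : ℕ) :
    S g (k + 1) (Fin n) =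
      ∑ a ∈ Finset.range (n + 1), (n.choose a : K) * (g a * S g k (Fin (n - a))) := by
  rw [S_rec]
  have h1 : ∀ A ∈ (Finset.univ : Finset (Fin n)).powerset,
      g A.card * S g k ↥(Aᶜ) = g A.card * S g k (Fin (n - A.card)) := by
    intro A _
    congr 1
    apply S_equiv
    apply Fintype.equivFinOfCardEq
    rw [Fintype.card_coe, Finset.card_compl, Fintype.card_fin]
  rw [Finset.sum_congr rfl h1]
  rw [Finset.sum_powerset_apply_card (fun a => g a * S g k (Fin (n - a)))]
  simp only [Finset.card_univ, Fintype.card_fin, nsmul_eq_mul]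

lemma coeff_G_pow (g : ℕ → K) [Algebra ℚ K] (k n : ℕ) :
    PowerSeries.coeff n
        ((PowerSeries.mk fun m => algebraMap ℚ K ((m.factorial : ℚ)⁻¹) * g m) ^ k) =
      algebraMap ℚ K ((n.factorial : ℚ)⁻¹) * S g k (Fin n) := by
  induction k generalizing n with
  | zero =>
    rw [pow_zero, PowerSeries.coeff_one, S_zero]
    rcases eq_or_ne n 0 with rfl | h
    · simp
    · simp [h]
  | succ k ih =>
    rw [pow_succ']
    rw [PowerSeries.coeff_mul, Finset.Nat.sum_antidiagonal_eq_sum_range_succ_mk]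
    rw [S_rec_fin, Finset.mul_sum]
    apply Finset.sum_congr rfl
    intro a ha
    have ha' : a ≤ n := Nat.lt_succ_iff.mp (Finset.mem_range.mp ha)
    rw [ih]
    simp only [PowerSeries.coeff_mk]
    have hc : (n.choose a : K) = algebraMap ℚ K ((n.choose a : ℚ)) := by
      simp
    rw [hc]
    have lhs : (algebraMap ℚ K ((a.factorial : ℚ)⁻¹) * g a) *
        (algebraMap ℚ K (((n - a).factorial : ℚ)⁻¹) * S g k (Fin (n - a))) =
        algebraMap ℚ K ((a.factorial : ℚ)⁻¹ * ((n - a).factorial : ℚ)⁻¹) *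
          (g a * S g k (Fin (n - a))) := by
      rw [map_mul]; ring
    have rhs : algebraMap ℚ K ((n.factorial : ℚ)⁻¹) *
        (algebraMap ℚ K ((n.choose a : ℚ)) * (g a * S g k (Fin (n - a)))) =
        algebraMap ℚ K ((n.factorial : ℚ)⁻¹ * (n.choose a : ℚ)) *
          (g a * S g k (Fin (n - a))) := by
      rw [map_mul]; ring
    rw [lhs, rhs]
    congr 2
    rw [Nat.cast_choose ℚ ha']
    have h1 : ((n.factorial : ℚ)) ≠ 0 := Nat.cast_ne_zero.mpr (Nat.factorial_ne_zero n)
    have h2 : ((a.factorial : ℚ)) ≠ 0 := Nat.cast_ne_zero.mpr (Nat.factorial_ne_zero a)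
    have h3 : (((n - a).factorial : ℚ)) ≠ 0 := Nat.cast_ne_zero.mpr (Nat.factorial_ne_zero _)
    field_simp

section Partitions

open Finpartition

variable {n k : ℕ}

/-- The partition of `Fin n` into the fibers of `σ`. -/
noncomputable def pOf (σ : Fin n → Fin k) : Finpartition (Finset.univ : Finset (Fin n)) :=
  Finpartition.ofSetoid (Setoid.ker σ)

lemma pOf_part (σ : Fin n → Fin k) (a : Fin n) : (pOf σ).part a = fib σ (σ a) := by
  ext b
  rw [pOf, Finpartition.mem_part_ofSetoid_iff_rel]
  simp only [fib, mem_filter, mem_univ, true_and]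
  exact ⟨fun h => h.symm, fun h => h.symm⟩

lemma parts_eq_image_part {α : Type*} [DecidableEq α] [Fintype α]
    (P : Finpartition (Finset.univ : Finset α)) :
    P.parts = Finset.univ.image P.part := by
  ext Γ
  simp only [Finset.mem_image]
  constructor
  · intro h
    obtain ⟨x, hx⟩ := P.nonempty_of_mem_parts h
    exact ⟨x, mem_univ x, P.part_eq_of_mem h hx⟩
  · rintro ⟨a, -, rfl⟩
    exact P.part_mem.2 (mem_univ a)

lemma parts_pOf (σ : Fin n → Fin k) :
    (pOf σ).parts = (Finset.univ.filter fun i => (fib σ i).Nonempty).image (fib σ) := by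
  rw [parts_eq_image_part]
  ext Γ
  simp only [Finset.mem_image, Finset.mem_filter, mem_univ, true_and]
  constructor
  · rintro ⟨a, -, rfl⟩
    rw [pOf_part]
    refine ⟨σ a, ?_, rfl⟩
    exact ⟨a, by simp [fib]⟩
  · rintro ⟨i, hne, rfl⟩
    obtain ⟨a, ha⟩ := hne
    have hσa : σ a = i := by simpa [fib] using ha
    exact ⟨a, by rw [pOf_part, hσa]⟩

lemma fib_mem_parts (σ : Fin n → Fin k) {i : Fin k} (h : (fib σ i).Nonempty) :
    fib σ i ∈ (pOf σ).parts := by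
  obtain ⟨a, ha⟩ := h
  have hσa : σ a = i := by simpa [fib] using ha
  rw [← hσa, ← pOf_part]
  exact (pOf σ).part_mem.2 (mem_univ a)

lemma fib_inj (σ : Fin n → Fin k) {i j : Fin k} (hi : (fib σ i).Nonempty)
    (hj : (fib σ j).Nonempty) (h : fib σ i = fib σ j) : i = j := by
  obtain ⟨a, ha⟩ := hi
  have h1 : σ a = i := by simpa [fib] using ha
  have h2 : σ a = j := by
    have : a ∈ fib σ j := h ▸ ha
    simpa [fib] using this
  rw [← h1, h2]

lemma fib_injOn (σ : Fin n → Fin k) :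
    Set.InjOn (fib σ) (Finset.univ.filter fun i => (fib σ i).Nonempty) := by
  intro i hi j hj h
  simp only [Finset.coe_filter, Set.mem_setOf_eq] at hi
  obtain ⟨a, ha⟩ := hi.2
  have h1 : σ a = i := by simpa [fib] using ha
  have h2 : σ a = j := by
    have : a ∈ fib σ j := h ▸ ha
    simpa [fib] using this
  rw [← h1, h2]

lemma card_parts_pOf (σ : Fin n → Fin k) :
    (pOf σ).parts.card = (Finset.univ.filter fun i => (fib σ i).Nonempty).card := by
  rw [parts_pOf]
  exact Finset.card_image_of_injOn (fib_injOn σ)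

lemma fib_nonempty_of_card (σ : Fin n → Fin k) (h : (pOf σ).parts.card = k) (i : Fin k) :
    (fib σ i).Nonempty := by
  rw [card_parts_pOf] at h
  have : (Finset.univ.filter fun i => (fib σ i).Nonempty) = Finset.univ :=
    Finset.eq_univ_of_card _ (by rw [h, Fintype.card_fin])
  have hi : i ∈ Finset.univ.filter fun i => (fib σ i).Nonempty := by
    rw [this]; exact mem_univ i
  simpa using (Finset.mem_filter.mp hi).2

lemma prod_fib (g : ℕ → K) (σ : Fin n → Fin k) (hne : ∀ i, (fib σ i).Nonempty) :
    ∏ i : Fin k, g (fib σ i).card = ∏ Γ ∈ (pOf σ).parts, g Γ.card := by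
  apply Finset.prod_bij (fun i _ => fib σ i)
  · intro i _
    exact fib_mem_parts σ (hne i)
  · intro i _ j _ h
    exact fib_inj σ (hne i) (hne j) h
  · intro Γ hΓ
    rw [parts_pOf] at hΓ
    obtain ⟨i, -, rfl⟩ := Finset.mem_image.mp hΓ
    exact ⟨i, mem_univ i, rfl⟩
  · intro i _
    rfl

lemma fib_of_part_equiv (π : Finpartition (Finset.univ : Finset (Fin n)))
    (e : Fin k ≃ {Γ // Γ ∈ π.parts}) (i : Fin k) :
    fib (fun x => e.symm ⟨π.part x, π.part_mem.2 (mem_univ x)⟩) i = (e i).1 := by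
  ext x
  simp only [fib, Finset.mem_filter, mem_univ, true_and]
  rw [Equiv.symm_apply_eq]
  constructor
  · intro h
    have hx : x ∈ π.part x := π.mem_part (mem_univ x)
    rwa [show π.part x = (e i).1 from congrArg Subtype.val h] at hx
  · intro h
    exact Subtype.ext (π.part_eq_of_mem (e i).2 h)

lemma pOf_of_equiv (π : Finpartition (Finset.univ : Finset (Fin n)))
    (e : Fin k ≃ {Γ // Γ ∈ π.parts}) :
    pOf (fun x => e.symm ⟨π.part x, π.part_mem.2 (mem_univ x)⟩) = π := by
  apply Finpartition.ext
  rw [parts_pOf]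
  ext Γ
  simp only [Finset.mem_image, Finset.mem_filter, mem_univ, true_and]
  constructor
  · rintro ⟨i, -, rfl⟩
    rw [fib_of_part_equiv]
    exact (e i).2
  · intro hΓ
    refine ⟨e.symm ⟨Γ, hΓ⟩, ?_, ?_⟩
    · rw [fib_of_part_equiv]
      simpa using π.nonempty_of_mem_parts hΓ
    · rw [fib_of_part_equiv]
      simp
  
lemma card_fiber_eq (π : Finpartition (Finset.univ : Finset (Fin n)))
    (hk : π.parts.card = k) :
    (Finset.univ.filter fun σ : Fin n → Fin k => pOf σ = π).card = k.factorial := by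
  have hcard : Fintype.card {Γ // Γ ∈ π.parts} = k := by rw [Fintype.card_coe, hk]
  have hmem : ∀ σ : Fin n → Fin k, pOf σ = π → ∀ i : Fin k, fib σ i ∈ π.parts := by
    intro σ hσ i
    rw [← hσ]
    exact fib_mem_parts σ (fib_nonempty_of_card σ (by rw [hσ, hk]) i)
  have hbij : ∀ (σ : Fin n → Fin k) (hσ : pOf σ = π),
      Function.Bijective (fun i : Fin k => (⟨fib σ i, hmem σ hσ i⟩ : {Γ // Γ ∈ π.parts})) := by
    intro σ hσ
    have hne := fib_nonempty_of_card σ (by rw [hσ, hk])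
    constructor
    · intro i j h
      exact fib_inj σ (hne i) (hne j) (congrArg Subtype.val h)
    · rintro ⟨Γ, hΓ⟩
      rw [← hσ, parts_pOf] at hΓ
      obtain ⟨i, -, rfl⟩ := Finset.mem_image.mp hΓ
      exact ⟨i, rfl⟩
  have key : (Finset.univ.filter fun σ : Fin n → Fin k => pOf σ = π).card
      = (Finset.univ : Finset (Fin k ≃ {Γ // Γ ∈ π.parts})).card := by
    refine Finset.card_bij'
      (fun σ hσ => Equiv.ofBijective _ (hbij σ (Finset.mem_filter.mp hσ).2))
      (fun e _ => fun x => e.symm ⟨π.part x, π.part_mem.2 (mem_univ x)⟩)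
      ?_ ?_ ?_ ?_
    · intro σ hσ
      exact mem_univ _
    · intro e he
      exact Finset.mem_filter.mpr ⟨mem_univ _, pOf_of_equiv π e⟩
    · intro σ hσ
      funext x
      rw [Equiv.symm_apply_eq]
      apply Subtype.ext
      show π.part x = fib σ (σ x)
      rw [← (Finset.mem_filter.mp hσ).2, pOf_part]
    · intro e he
      apply Equiv.ext
      intro i
      rw [Equiv.ofBijective_apply]
      exact Subtype.ext (fib_of_part_equiv π e i)
  rw [key, Finset.card_univ,
    Fintype.card_equiv (Fintype.equivFinOfCardEq hcard).symm, Fintype.card_fin]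

lemma prod_fib_eq_zero (g : ℕ → K) (hg : g 0 = 0) (σ : Fin n → Fin k)
    (h : (pOf σ).parts.card ≠ k) :
    ∏ i : Fin k, g (fib σ i).card = 0 := by
  have hex : ∃ i, fib σ i = ∅ := by
    by_contra hc
    push_neg at hc
    apply h
    rw [card_parts_pOf]
    have huniv : (Finset.univ.filter fun i => (fib σ i).Nonempty) = Finset.univ := by
      apply Finset.filter_true_of_mem
      intro i _
      exact hc i
    rw [huniv, Finset.card_univ, Fintype.card_fin]
  obtain ⟨i, hi⟩ := hex
  apply Finset.prod_eq_zero (Finset.mem_univ i)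
  rw [hi]
  simpa using hg

lemma S_eq (g : ℕ → K) (hg : g 0 = 0) (k n : ℕ) :
    S g k (Fin n) = (k.factorial : K) *
      ∑ π ∈ Finset.univ.filter
          (fun π : Finpartition (Finset.univ : Finset (Fin n)) => π.parts.card = k),
        ∏ Γ ∈ π.parts, g Γ.card := by
  rw [S, ← Finset.sum_fiberwise Finset.univ pOf (fun σ => ∏ i, g (fib σ i).card),
    Finset.mul_sum, Finset.sum_filter]
  apply Finset.sum_congr rfl
  intro π _
  by_cases hπ : π.parts.card = k
  · rw [if_pos hπ]
    have hconst : ∀ σ ∈ Finset.univ.filter (fun σ : Fin n → Fin k => pOf σ = π),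
        (∏ i, g (fib σ i).card) = ∏ Γ ∈ π.parts, g Γ.card := by
      intro σ hσ
      have hσ2 := (Finset.mem_filter.mp hσ).2
      rw [prod_fib g σ (fib_nonempty_of_card σ (by rw [hσ2, hπ])), hσ2]
    rw [Finset.sum_congr rfl hconst, Finset.sum_const, card_fiber_eq π hπ, nsmul_eq_mul]
  · rw [if_neg hπ]
    apply Finset.sum_eq_zero
    intro σ hσ
    exact prod_fib_eq_zero g hg σ (by rw [(Finset.mem_filter.mp hσ).2]; exact hπ)

end Partitions

end FaaAux

/-- Faà di Bruno for formal power series in exponential normalization: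
if `f(X) = ∑_{k≥1} (fₖ/k!) Xᵏ` and `g(X) = ∑_{k≥1} (gₖ/k!) Xᵏ`, then the `n`-th exponential
coefficient of `f ∘ g` is `∑_{π ∈ Pₙ} f_{|π|} ∏_{Γ ∈ π} g_{|Γ|}`. -/
theorem faa_di_bruno_powerSeries {K : Type*} [CommRing K] [Algebra ℚ K]
    (f g : ℕ → K) (hf : f 0 = 0) (hg : g 0 = 0) (n : ℕ) (hn : 1 ≤ n) :
    PowerSeries.coeff n
        (pcomp (PowerSeries.mk fun k => algebraMap ℚ K ((k.factorial : ℚ)⁻¹) * f k)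
               (PowerSeries.mk fun k => algebraMap ℚ K ((k.factorial : ℚ)⁻¹) * g k)) =
      algebraMap ℚ K ((n.factorial : ℚ)⁻¹) *
        ∑ π : Finpartition (Finset.univ : Finset (Fin n)),
          f π.parts.card * ∏ Γ ∈ π.parts, g Γ.card := by
  classical
  simp only [pcomp, PowerSeries.coeff_mk]
  have step : ∀ k ∈ Finset.range (n + 1),
      (algebraMap ℚ K ((k.factorial : ℚ)⁻¹) * f k) *
        PowerSeries.coeff n
          ((PowerSeries.mk fun m => algebraMap ℚ K ((m.factorial : ℚ)⁻¹) * g m) ^ k) =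
      algebraMap ℚ K ((n.factorial : ℚ)⁻¹) *
        ∑ π ∈ Finset.univ.filter
            (fun π : Finpartition (Finset.univ : Finset (Fin n)) => π.parts.card = k),
          f π.parts.card * ∏ Γ ∈ π.parts, g Γ.card := by
    intro k _
    rw [FaaAux.coeff_G_pow g k n, FaaAux.S_eq g hg k n]
    set T := ∑ π ∈ Finset.univ.filter
        (fun π : Finpartition (Finset.univ : Finset (Fin n)) => π.parts.card = k),
      ∏ Γ ∈ π.parts, g Γ.card with hT
    have hfact : (algebraMap ℚ K ((k.factorial : ℚ)⁻¹)) * (k.factorial : K) = 1 := by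
      rw [show ((k.factorial : K)) = algebraMap ℚ K (k.factorial : ℚ) by simp, ← map_mul,
        inv_mul_cancel₀ (Nat.cast_ne_zero.mpr (Nat.factorial_ne_zero k)), map_one]
    have h2 : f k * T = ∑ π ∈ Finset.univ.filter
        (fun π : Finpartition (Finset.univ : Finset (Fin n)) => π.parts.card = k),
        f π.parts.card * ∏ Γ ∈ π.parts, g Γ.card := by
      rw [hT, Finset.mul_sum]
      apply Finset.sum_congr rfl
      intro π hπ
      rw [(Finset.mem_filter.mp hπ).2]
    calc (algebraMap ℚ K ((k.factorial : ℚ)⁻¹) * f k) *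
          (algebraMap ℚ K ((n.factorial : ℚ)⁻¹) * ((k.factorial : K) * T))
        = algebraMap ℚ K ((n.factorial : ℚ)⁻¹) *
            ((algebraMap ℚ K ((k.factorial : ℚ)⁻¹) * (k.factorial : K)) * (f k * T)) := by
          ring
      _ = algebraMap ℚ K ((n.factorial : ℚ)⁻¹) * (f k * T) := by rw [hfact, one_mul]
      _ = algebraMap ℚ K ((n.factorial : ℚ)⁻¹) * ∑ π ∈ Finset.univ.filter
            (fun π : Finpartition (Finset.univ : Finset (Fin n)) => π.parts.card = k),
            f π.parts.card * ∏ Γ ∈ π.parts, g Γ.card := by rw [h2]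
  rw [Finset.sum_congr rfl step, ← Finset.mul_sum]
  congr 1
  exact Finset.sum_fiberwise_of_maps_to
    (fun π _ => Finset.mem_range.mpr (Nat.lt_succ_of_le
      (le_trans π.card_parts_le_card (by simp)))) _
end

section
/- Let h_k (k ≥ 2) be elements of a commutative ring, let f(X) = X − ∑_{k≥2} (h_k/k!) X^k, and let g be the compositional inverse formal power series of f. Then g_0 = 0, g_1 = 1, and for k ≥ 2 one has g_k = ∑_{T ∈ S_k} E_h(T), where S_k is the set of isomorphism classes of finite rooted trees whose leaves are in bijection with {1,…,k} and in which every internal (non-leaf) vertex has at least two children, and E_h(T) = ∏_{v internal} h_{(number of children of v)}. -/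
open scoped Classical

/-- An isomorphism class of finite rooted trees whose leaves are in bijection with `{1,…,k}` and
in which every internal vertex has at least two children is canonically encoded by the laminar
family of the leaf-label sets of its subtrees.  Such a family contains the full set (the root),
all singletons (the leaves), is laminar, and does not contain `∅`; conversely any such family
arises from a unique isomorphism class of such trees (since no two vertices share the same leaf
set when all outdegrees are ≥ 2, and a partition of a set into proper subsets automatically
has ≥ 2 blocks). -/
def IsTreeFam {k : ℕ} (F : Finset (Finset (Fin k))) : Prop :=
  (∀ A ∈ F, ∀ B ∈ F, A ⊆ B ∨ B ⊆ A ∨ Disjoint A B) ∧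
    Finset.univ ∈ F ∧ (∀ i : Fin k, {i} ∈ F) ∧ ∅ ∉ F

/-- The number of children of the vertex (with leaf set) `A` in the tree encoded by `F`:
the number of maximal members of `F` strictly below `A`. -/
def childCount {k : ℕ} (F : Finset (Finset (Fin k))) (A : Finset (Fin k)) : ℕ :=
  (F.filter fun B => B ⊂ A ∧ ¬ ∃ C ∈ F, B ⊂ C ∧ C ⊂ A).card

/-- The `h`-energy `E_h(T) = ∏_{v internal} h_{#children of v}` of the tree encoded by `F`;
the internal vertices are exactly the members of `F` with more than one element. -/
noncomputable def treeEnergy {k : ℕ} {K : Type*} [CommRing K] (h : ℕ → K)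
    (F : Finset (Finset (Fin k))) : K :=
  ∏ A ∈ F.filter (fun A => 1 < A.card), h (childCount F A)

section Comb
open Finset
variable {K : Type*} [CommRing K]
variable {α β : Type*} [DecidableEq α] [DecidableEq β]

/-- tree families on an arbitrary finset -/
def TF (S : Finset α) (F : Finset (Finset α)) : Prop :=
  (∀ A ∈ F, A ⊆ S) ∧ (∀ A ∈ F, ∀ B ∈ F, A ⊆ B ∨ B ⊆ A ∨ Disjoint A B) ∧
    S ∈ F ∧ (∀ i ∈ S, ({i} : Finset α) ∈ F) ∧ ∅ ∉ F

noncomputable def cc (F : Finset (Finset α)) (A : Finset α) : ℕ :=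
  (F.filter fun B => B ⊂ A ∧ ¬ ∃ C ∈ F, B ⊂ C ∧ C ⊂ A).card

noncomputable def en (h : ℕ → K) (F : Finset (Finset α)) : K :=
  ∏ A ∈ F.filter (fun A => 1 < A.card), h (cc F A)

noncomputable def TFs (S : Finset α) : Finset (Finset (Finset α)) :=
  S.powerset.powerset.filter (TF S)

noncomputable def trSum (h : ℕ → K) (S : Finset α) : K := ∑ F ∈ TFs S, en h F

lemma mem_TFs {S : Finset α} {F : Finset (Finset α)} : F ∈ TFs S ↔ TF S F := by
  unfold TFs
  constructor
  · exact fun hF => (mem_filter.mp hF).2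
  · intro hF
    refine mem_filter.mpr ⟨?_, hF⟩
    refine mem_powerset.mpr fun A hA => mem_powerset.mpr (hF.1 A hA)

lemma trSum_empty (h : ℕ → K) : trSum h (∅ : Finset α) = 0 := by
  unfold trSum
  have : TFs (∅ : Finset α) = ∅ := by
    refine eq_empty_of_forall_notMem fun F hF => ?_
    have hF' := mem_TFs.mp hF
    have h1 : (∅ : Finset α) ∈ F := hF'.2.2.1
    exact hF'.2.2.2.2 h1
  rw [this, sum_empty]

lemma TFs_singleton (a : α) : TFs ({a} : Finset α) = {{({a} : Finset α)}} := by
  ext F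
  rw [mem_TFs, mem_singleton]
  constructor
  · intro hF
    apply Finset.ext
    intro A
    rw [mem_singleton]
    constructor
    · intro hA
      have hsub := hF.1 A hA
      have hne : A ≠ ∅ := fun hAe => hF.2.2.2.2 (hAe ▸ hA)
      obtain ⟨x, hx⟩ := Finset.nonempty_iff_ne_empty.mpr hne
      have := hsub hx
      rw [mem_singleton] at this
      subst this
      apply Finset.Subset.antisymm hsub
      intro y hy
      rw [mem_singleton] at hy
      subst hy; exact hx
    · intro hA; subst hA; exact hF.2.2.1
  · intro hF; subst hF
    refine ⟨?_, ?_, ?_, ?_, ?_⟩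
    · intro A hA; rw [mem_singleton] at hA; subst hA; rfl
    · intro A hA B hB; rw [mem_singleton] at hA hB; subst hA; subst hB; left; rfl
    · exact mem_singleton_self _
    · intro i hi; rw [mem_singleton] at hi; subst hi; exact mem_singleton_self _
    · intro hmem; rw [mem_singleton] at hmem
      exact (singleton_ne_empty a) hmem.symm

lemma trSum_singleton (h : ℕ → K) (a : α) : trSum h ({a} : Finset α) = 1 := by
  unfold trSum
  rw [TFs_singleton, sum_singleton]
  unfold en
  have : ({({a} : Finset α)} : Finset (Finset α)).filter (fun A => 1 < A.card) = ∅ := by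
    refine eq_empty_of_forall_notMem fun A hA => ?_
    rw [mem_filter, mem_singleton] at hA
    obtain ⟨rfl, h2⟩ := hA
    simp at h2
  rw [this, prod_empty]




variable (f : α → β) (g : β → α)

lemma img_filter_cc (hf : Function.Injective f) (F : Finset (Finset α)) (A : Finset α) :
    (F.image (Finset.image f)).filter
      (fun B' => B' ⊂ A.image f ∧ ¬ ∃ C' ∈ F.image (Finset.image f), B' ⊂ C' ∧ C' ⊂ A.image f)
    = (F.filter fun B => B ⊂ A ∧ ¬ ∃ C ∈ F, B ⊂ C ∧ C ⊂ A).image (Finset.image f) := by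
  have hss : ∀ (U V : Finset α), U.image f ⊂ V.image f ↔ U ⊂ V := by
    intro U V
    rw [Finset.ssubset_iff_subset_ne, Finset.ssubset_iff_subset_ne,
      Finset.image_subset_image_iff hf]
    constructor
    · rintro ⟨h1, h2⟩; exact ⟨h1, fun he => h2 (he ▸ rfl)⟩
    · rintro ⟨h1, h2⟩; exact ⟨h1, fun he => h2 (Finset.image_injective hf he)⟩
  ext B'
  simp only [mem_filter, mem_image]
  constructor
  · rintro ⟨⟨B, hB, rfl⟩, h1, h2⟩
    refine ⟨B, ⟨hB, (hss _ _).mp h1, ?_⟩, rfl⟩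
    rintro ⟨C, hC, hBC, hCA⟩
    exact h2 ⟨C.image f, ⟨C, hC, rfl⟩, (hss _ _).mpr hBC, (hss _ _).mpr hCA⟩
  · rintro ⟨B, ⟨hB, h1, h2⟩, rfl⟩
    refine ⟨⟨B, hB, rfl⟩, (hss _ _).mpr h1, ?_⟩
    rintro ⟨C', ⟨C, hC, rfl⟩, hBC, hCA⟩
    exact h2 ⟨C, hC, (hss _ _).mp hBC, (hss _ _).mp hCA⟩

lemma cc_image (hf : Function.Injective f) (F : Finset (Finset α)) (A : Finset α) :
    cc (F.image (Finset.image f)) (A.image f) = cc F A := by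
  unfold cc
  rw [img_filter_cc f hf F A, Finset.card_image_of_injective _ (Finset.image_injective hf)]

lemma en_image (h : ℕ → K) (hf : Function.Injective f) (F : Finset (Finset α)) :
    en h (F.image (Finset.image f)) = en h F := by
  unfold en
  have h1 : (F.image (Finset.image f)).filter (fun A => 1 < A.card)
      = (F.filter (fun A => 1 < A.card)).image (Finset.image f) := by
    ext A'
    simp only [mem_filter, mem_image]
    constructor
    · rintro ⟨⟨A, hA, rfl⟩, hc⟩
      rw [Finset.card_image_of_injective _ hf] at hc
      exact ⟨A, ⟨hA, hc⟩, rfl⟩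
    · rintro ⟨A, ⟨hA, hc⟩, rfl⟩
      exact ⟨⟨A, hA, rfl⟩, by rwa [Finset.card_image_of_injective _ hf]⟩
  rw [h1, Finset.prod_image]
  · exact Finset.prod_congr rfl fun A hA => by rw [cc_image f hf]
  · intro x _ y _ hxy
    exact Finset.image_injective hf hxy

lemma TF_image (hf : Function.Injective f) {S : Finset α} {F : Finset (Finset α)}
    (hF : TF S F) : TF (S.image f) (F.image (Finset.image f)) := by
  obtain ⟨hsub, hlam, hSF, hsing, hemp⟩ := hF
  refine ⟨?_, ?_, ?_, ?_, ?_⟩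
  · rintro A' hA'
    rw [mem_image] at hA'
    obtain ⟨A, hA, rfl⟩ := hA'
    exact Finset.image_subset_image (hsub A hA)
  · rintro A' hA' B' hB'
    rw [mem_image] at hA' hB'
    obtain ⟨A, hA, rfl⟩ := hA'
    obtain ⟨B, hB, rfl⟩ := hB'
    rcases hlam A hA B hB with h1 | h1 | h1
    · exact Or.inl (Finset.image_subset_image h1)
    · exact Or.inr (Or.inl (Finset.image_subset_image h1))
    · exact Or.inr (Or.inr ((Finset.disjoint_image hf).mpr h1))
  · exact mem_image.mpr ⟨S, hSF, rfl⟩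
  · intro b hb
    rw [mem_image] at hb
    obtain ⟨i, hi, rfl⟩ := hb
    exact mem_image.mpr ⟨{i}, hsing i hi, Finset.image_singleton f i⟩
  · intro hmem
    rw [mem_image] at hmem
    obtain ⟨A, hA, hAe⟩ := hmem
    rw [Finset.image_eq_empty] at hAe
    exact hemp (hAe ▸ hA)

lemma TF_preimage (hgf : ∀ a, g (f a) = a) {S : Finset α} {G : Finset (Finset β)}
    (hG : TF (S.image f) G) :
    TF S (G.image (Finset.image g)) ∧ (G.image (Finset.image g)).image (Finset.image f) = G := by
  obtain ⟨hsub, hlam, hSG, hsing, hemp⟩ := hG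
  have hrange : ∀ A' ∈ G, ∀ b ∈ A', f (g b) = b := by
    intro A' hA' b hb
    have := hsub A' hA' hb
    rw [mem_image] at this
    obtain ⟨a, _, rfl⟩ := this
    rw [hgf]
  have hback : ∀ A' ∈ G, (A'.image g).image f = A' := by
    intro A' hA'
    rw [Finset.image_image]
    refine Finset.ext fun b => ?_
    rw [mem_image]
    constructor
    · rintro ⟨b', hb', rfl⟩
      simp only [Function.comp_apply]
      rw [hrange A' hA' b' hb']
      exact hb'
    · intro hb
      exact ⟨b, hb, by simp only [Function.comp_apply]; rw [hrange A' hA' b hb]⟩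
  constructor
  · refine ⟨?_, ?_, ?_, ?_, ?_⟩
    · rintro A hA
      rw [mem_image] at hA
      obtain ⟨A', hA', rfl⟩ := hA
      intro x hx
      rw [mem_image] at hx
      obtain ⟨b, hb, rfl⟩ := hx
      have := hsub A' hA' hb
      rw [mem_image] at this
      obtain ⟨a, ha, rfl⟩ := this
      rw [hgf]; exact ha
    · rintro A hA B hB
      rw [mem_image] at hA hB
      obtain ⟨A', hA', rfl⟩ := hA
      obtain ⟨B', hB', rfl⟩ := hB
      rcases hlam A' hA' B' hB' with h1 | h1 | h1
      · exact Or.inl (Finset.image_subset_image h1)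
      · exact Or.inr (Or.inl (Finset.image_subset_image h1))
      · refine Or.inr (Or.inr (Finset.disjoint_left.mpr ?_))
        rintro x hx hx'
        rw [mem_image] at hx hx'
        obtain ⟨a', ha', rfl⟩ := hx
        obtain ⟨b', hb', hba⟩ := hx'
        have e1 := hrange A' hA' a' ha'
        have e2 := hrange B' hB' b' hb'
        have : b' = a' := by rw [← e2, hba, e1]
        subst this
        exact (Finset.disjoint_left.mp h1) ha' hb'
    · refine mem_image.mpr ⟨S.image f, hSG, ?_⟩
      rw [Finset.image_image]
      refine Finset.ext fun a => ?_
      simp only [mem_image, Function.comp_apply]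
      constructor
      · rintro ⟨a', ha', rfl⟩; rw [hgf]; exact ha'
      · intro ha; exact ⟨a, ha, by rw [hgf]⟩
    · intro i hi
      refine mem_image.mpr ⟨{f i}, hsing (f i) (mem_image.mpr ⟨i, hi, rfl⟩), ?_⟩
      rw [Finset.image_singleton, hgf]
    · intro hmem
      rw [mem_image] at hmem
      obtain ⟨A', hA', hAe⟩ := hmem
      rw [Finset.image_eq_empty] at hAe
      exact hemp (hAe ▸ hA')
  · rw [Finset.image_image]
    refine Finset.ext fun A' => ?_
    simp only [mem_image, Function.comp_apply]
    constructor
    · rintro ⟨B', hB', rfl⟩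
      rw [hback B' hB']
      exact hB'
    · intro hA'
      exact ⟨A', hA', hback A' hA'⟩

lemma trSum_image_aux (h : ℕ → K) (hf : Function.Injective f) (hgf : ∀ a, g (f a) = a)
    (S : Finset α) : trSum h (S.image f) = trSum h S := by
  unfold trSum
  refine (Finset.sum_bij (fun F _ => F.image (Finset.image f)) ?_ ?_ ?_ ?_).symm
  · intro F hF
    exact mem_TFs.mpr (TF_image f hf (mem_TFs.mp hF))
  · intro F₁ h₁ F₂ h₂ he
    exact Finset.image_injective (Finset.image_injective hf) he
  · intro G hG
    obtain ⟨h1, h2⟩ := TF_preimage f g hgf (mem_TFs.mp hG)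
    exact ⟨G.image (Finset.image g), mem_TFs.mpr h1, h2⟩
  · intro F _
    exact (en_image f h hf F).symm

lemma trSum_image (h : ℕ → K) (hf : Function.Injective f) (S : Finset α) :
    trSum h (S.image f) = trSum h S := by
  rcases Finset.eq_empty_or_nonempty S with rfl | ⟨a, ha⟩
  · rw [Finset.image_empty, trSum_empty, trSum_empty]
  · have : Nonempty α := ⟨a⟩
    exact trSum_image_aux f (Function.invFun f) h hf
      (fun x => Function.leftInverse_invFun hf x) S
noncomputable def children (F : Finset (Finset α)) (S : Finset α) : Finset (Finset α) :=
  F.filter fun B => B ⊂ S ∧ ¬ ∃ C ∈ F, B ⊂ C ∧ C ⊂ S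

lemma cc_eq_card_children (F : Finset (Finset α)) (S : Finset α) :
    cc F S = (children F S).card := rfl

def IsPart (S : Finset α) (P : Finset (Finset α)) : Prop :=
  (∀ B ∈ P, B ⊆ S) ∧ (∀ B ∈ P, B ≠ ∅) ∧
    (∀ B ∈ P, ∀ B' ∈ P, B ≠ B' → Disjoint B B') ∧ ∀ i ∈ S, ∃ B ∈ P, i ∈ B

noncomputable def Par (S : Finset α) : Finset (Finset (Finset α)) :=
  S.powerset.powerset.filter (IsPart S)

noncomputable def PPar (S : Finset α) : Finset (Finset (Finset α)) :=
  (Par S).filter (fun P => ∀ B ∈ P, B ≠ S)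

lemma mem_Par {S : Finset α} {P : Finset (Finset α)} : P ∈ Par S ↔ IsPart S P := by
  unfold Par
  constructor
  · exact fun hP => (mem_filter.mp hP).2
  · intro hP
    exact mem_filter.mpr ⟨mem_powerset.mpr fun B hB => mem_powerset.mpr (hP.1 B hB), hP⟩

lemma mem_PPar {S : Finset α} {P : Finset (Finset α)} :
    P ∈ PPar S ↔ IsPart S P ∧ ∀ B ∈ P, B ≠ S := by
  unfold PPar
  rw [mem_filter, mem_Par]

section TreeDecomp
variable {S : Finset α} {F : Finset (Finset α)}

lemma exists_child (hF : TF S F) {A : Finset α} (hA : A ∈ F) (hAS : A ⊂ S) :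
    ∃ B ∈ children F S, A ⊆ B := by
  set T := F.filter (fun C => A ⊆ C ∧ C ⊂ S) with hT
  have hTne : T.Nonempty := ⟨A, mem_filter.mpr ⟨hA, Finset.Subset.refl A, hAS⟩⟩
  obtain ⟨B, hBT, hBmax⟩ := Finset.exists_max_image T Finset.card hTne
  rw [hT, mem_filter] at hBT
  obtain ⟨hBF, hAB, hBS⟩ := hBT
  refine ⟨B, mem_filter.mpr ⟨hBF, hBS, ?_⟩, hAB⟩
  rintro ⟨C, hCF, hBC, hCS⟩
  have hCT : C ∈ T := mem_filter.mpr ⟨hCF, hAB.trans hBC.subset, hCS⟩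
  exact absurd (hBmax C hCT) (not_le_of_gt (Finset.card_lt_card hBC))

lemma children_disjoint (hF : TF S F) {B B' : Finset α}
    (hB : B ∈ children F S) (hB' : B' ∈ children F S) (hne : B ≠ B') : Disjoint B B' := by
  rw [children, mem_filter] at hB hB'
  rcases hF.2.1 B hB.1 B' hB'.1 with h1 | h1 | h1
  · exact absurd ⟨B', hB'.1, ssubset_of_subset_of_ne h1 hne, hB'.2.1⟩ hB.2.2
  · exact absurd ⟨B, hB.1, ssubset_of_subset_of_ne h1 (Ne.symm hne), hB.2.1⟩ hB'.2.2
  · exact h1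

lemma singleton_mem_ssub (hF : TF S F) (h2 : 1 < S.card) {i : α} (hi : i ∈ S) :
    ({i} : Finset α) ⊂ S := by
  refine ssubset_of_subset_of_ne (Finset.singleton_subset_iff.mpr hi) ?_
  intro he
  rw [← he] at h2
  simp at h2

lemma children_cover (hF : TF S F) (h2 : 1 < S.card) :
    ∀ i ∈ S, ∃ B ∈ children F S, i ∈ B := by
  intro i hi
  obtain ⟨B, hB, hsub⟩ := exists_child hF (hF.2.2.2.1 i hi) (singleton_mem_ssub hF h2 hi)
  exact ⟨B, hB, hsub (mem_singleton_self i)⟩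

lemma children_mem_PPar (hF : TF S F) (h2 : 1 < S.card) : children F S ∈ PPar S := by
  rw [mem_PPar]
  refine ⟨⟨?_, ?_, ?_, children_cover hF h2⟩, ?_⟩
  · intro B hB
    exact ((mem_filter.mp hB).2.1).subset
  · intro B hB hBe
    exact hF.2.2.2.2 (hBe ▸ (mem_filter.mp hB).1)
  · intro B hB B' hB' hne
    exact children_disjoint hF hB hB' hne
  · intro B hB
    exact ((mem_filter.mp hB).2.1).ne

lemma restrict_mem_TFs (hF : TF S F) {B : Finset α} (hB : B ∈ children F S) :
    F.filter (· ⊆ B) ∈ TFs B := by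
  rw [children, mem_filter] at hB
  refine mem_TFs.mpr ⟨?_, ?_, ?_, ?_, ?_⟩
  · intro A hA
    exact (mem_filter.mp hA).2
  · intro A hA A' hA'
    exact hF.2.1 A (mem_filter.mp hA).1 A' (mem_filter.mp hA').1
  · exact mem_filter.mpr ⟨hB.1, Finset.Subset.refl B⟩
  · intro i hi
    exact mem_filter.mpr ⟨hF.2.2.2.1 i (hF.1 B hB.1 hi), Finset.singleton_subset_iff.mpr hi⟩
  · intro hc
    exact hF.2.2.2.2 (mem_filter.mp hc).1

lemma child_unique (hF : TF S F) {A B B' : Finset α} (hA : A ∈ F)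
    (hB : B ∈ children F S) (hB' : B' ∈ children F S) (h1 : A ⊆ B) (h2 : A ⊆ B') : B = B' := by
  by_contra hne
  have hd := children_disjoint hF hB hB' hne
  have hAe : A = ∅ := by
    rw [← Finset.subset_empty]
    intro x hx
    exact absurd (Finset.disjoint_left.mp hd (h1 hx)) (fun hc => hc (h2 hx))
  exact hF.2.2.2.2 (hAe ▸ hA)

lemma tree_decomp (hF : TF S F) (h2 : 1 < S.card) :
    insert S ((children F S).attach.biUnion fun B => F.filter (· ⊆ B.1)) = F := by
  refine Finset.ext fun A => ?_
  rw [mem_insert, mem_biUnion]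
  constructor
  · rintro (rfl | ⟨B, _, hA⟩)
    · exact hF.2.2.1
    · exact (mem_filter.mp hA).1
  · intro hA
    by_cases hAS : A = S
    · exact Or.inl hAS
    · obtain ⟨B, hB, hsub⟩ := exists_child hF hA (ssubset_of_subset_of_ne (hF.1 A hA) hAS)
      exact Or.inr ⟨⟨B, hB⟩, mem_attach _ _, mem_filter.mpr ⟨hA, hsub⟩⟩

lemma cc_restrict (hF : TF S F) {A B : Finset α} (hAB : A ⊆ B) :
    cc (F.filter (· ⊆ B)) A = cc F A := by
  unfold cc
  congr 1
  refine Finset.ext fun B'' => ?_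
  simp only [mem_filter]
  constructor
  · rintro ⟨⟨hB''F, _⟩, hss, hnex⟩
    refine ⟨hB''F, hss, ?_⟩
    rintro ⟨C, hC, hc1, hc2⟩
    exact hnex ⟨C, ⟨hC, (hc2.subset).trans hAB⟩, hc1, hc2⟩
  · rintro ⟨hB''F, hss, hnex⟩
    refine ⟨⟨hB''F, (hss.subset).trans hAB⟩, hss, ?_⟩
    rintro ⟨C, ⟨hC, _⟩, hc1, hc2⟩
    exact hnex ⟨C, hC, hc1, hc2⟩

lemma energy_decomp (h : ℕ → K) (hF : TF S F) (h2 : 1 < S.card) :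
    en h F = h (cc F S) * ∏ B ∈ (children F S).attach, en h (F.filter (· ⊆ B.1)) := by
  have hstep : F.filter (fun A => 1 < A.card)
      = insert S ((children F S).attach.biUnion
          fun B => (F.filter (· ⊆ B.1)).filter (fun A => 1 < A.card)) := by
    refine Finset.ext fun A => ?_
    rw [mem_filter, mem_insert, mem_biUnion]
    constructor
    · rintro ⟨hAF, hAc⟩
      by_cases hAS : A = S
      · exact Or.inl hAS
      · obtain ⟨B, hB, hsub⟩ := exists_child hF hAF (ssubset_of_subset_of_ne (hF.1 A hAF) hAS)
        exact Or.inr ⟨⟨B, hB⟩, mem_attach _ _,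
          mem_filter.mpr ⟨mem_filter.mpr ⟨hAF, hsub⟩, hAc⟩⟩
    · rintro (rfl | ⟨B, _, hA⟩)
      · exact ⟨hF.2.2.1, h2⟩
      · rw [mem_filter, mem_filter] at hA
        exact ⟨hA.1.1, hA.2⟩
  have hSnot : S ∉ (children F S).attach.biUnion
      fun B => (F.filter (· ⊆ B.1)).filter (fun A => 1 < A.card) := by
    rw [mem_biUnion]
    rintro ⟨⟨B, hB⟩, _, hS⟩
    rw [mem_filter, mem_filter] at hS
    exact ((mem_filter.mp hB).2.1).ne
      (Finset.Subset.antisymm ((mem_filter.mp hB).2.1).subset hS.1.2)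
  have hdisj : (↑(children F S).attach : Set _).PairwiseDisjoint
      (fun B : {x // x ∈ children F S} => (F.filter (· ⊆ B.1)).filter (fun A => 1 < A.card)) := by
    rintro ⟨B, hB⟩ _ ⟨B', hB'⟩ _ hne
    have hBne : B ≠ B' := fun he => hne (Subtype.ext he)
    simp only [Function.onFun]
    rw [Finset.disjoint_left]
    intro A hA hA'
    rw [mem_filter, mem_filter] at hA hA'
    exact hBne (child_unique hF hA.1.1 hB hB' hA.1.2 hA'.1.2)
  unfold en
  rw [hstep, Finset.prod_insert hSnot, Finset.prod_biUnion hdisj]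
  have : ∀ B ∈ (children F S).attach,
      (∏ A ∈ ((F.filter (· ⊆ B.1)).filter fun A => 1 < A.card), h (cc F A))
      = ∏ A ∈ ((F.filter (· ⊆ B.1)).filter fun A => 1 < A.card), h (cc (F.filter (· ⊆ B.1)) A) := by
    intro B _
    refine Finset.prod_congr rfl fun A hA => ?_
    rw [mem_filter, mem_filter] at hA
    rw [cc_restrict hF hA.1.2]
  rw [Finset.prod_congr rfl this]

lemma reconstruct (h2 : 1 < S.card) {P : Finset (Finset α)} (hP : P ∈ PPar S)
    (p : ∀ B ∈ P, Finset (Finset α)) (hp : ∀ B (hB : B ∈ P), p B hB ∈ TFs B) :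
    TF S (insert S (P.attach.biUnion fun B => p B.1 B.2)) ∧
    children (insert S (P.attach.biUnion fun B => p B.1 B.2)) S = P ∧
    ∀ B (hB : B ∈ P), (insert S (P.attach.biUnion fun B => p B.1 B.2)).filter (· ⊆ B) = p B hB := by
  obtain ⟨⟨hPsub, hPne, hPdis, hPcov⟩, hPprop⟩ := mem_PPar.mp hP
  have hproper : ∀ B ∈ P, B ⊂ S := fun B hB => ssubset_of_subset_of_ne (hPsub B hB) (hPprop B hB)
  have hSne : S.Nonempty := Finset.card_pos.mp (by omega)
  set F := insert S (P.attach.biUnion fun B => p B.1 B.2) with hFdef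
  have hmemF : ∀ A, A ∈ F ↔ A = S ∨ ∃ B, ∃ hB : B ∈ P, A ∈ p B hB := by
    intro A
    rw [hFdef, mem_insert, mem_biUnion]
    constructor
    · rintro (rfl | ⟨⟨B, hB⟩, _, hA⟩)
      · exact Or.inl rfl
      · exact Or.inr ⟨B, hB, hA⟩
    · rintro (rfl | ⟨B, hB, hA⟩)
      · exact Or.inl rfl
      · exact Or.inr ⟨⟨B, hB⟩, mem_attach _ _, hA⟩
  have hsubF : ∀ A ∈ F, A ⊆ S := by
    intro A hA
    rcases (hmemF A).mp hA with rfl | ⟨B, hB, hA'⟩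
    · exact Finset.Subset.refl _
    · exact ((mem_TFs.mp (hp B hB)).1 A hA').trans (hPsub B hB)
  have hTF : TF S F := by
    refine ⟨hsubF, ?_, (hmemF S).mpr (Or.inl rfl), ?_, ?_⟩
    · intro A hA A' hA'
      rcases (hmemF A).mp hA with rfl | ⟨B, hB, hAm⟩
      · exact Or.inr (Or.inl (hsubF A' hA'))
      rcases (hmemF A').mp hA' with rfl | ⟨B', hB', hAm'⟩
      · exact Or.inl (hsubF A hA)
      by_cases he : B = B'
      · subst he
        exact (mem_TFs.mp (hp B hB)).2.1 A hAm A' hAm'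
      · refine Or.inr (Or.inr ?_)
        exact Finset.disjoint_of_subset_left ((mem_TFs.mp (hp B hB)).1 A hAm)
          (Finset.disjoint_of_subset_right ((mem_TFs.mp (hp B' hB')).1 A' hAm')
            (hPdis B hB B' hB' he))
    · intro i hi
      obtain ⟨B, hB, hiB⟩ := hPcov i hi
      exact (hmemF _).mpr (Or.inr ⟨B, hB, (mem_TFs.mp (hp B hB)).2.2.2.1 i hiB⟩)
    · intro hc
      rcases (hmemF ∅).mp hc with he | ⟨B, hB, hc'⟩
      · exact hSne.ne_empty he.symm
      · exact (mem_TFs.mp (hp B hB)).2.2.2.2 hc'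
  have hchild : children F S = P := by
    refine Finset.ext fun B₀ => ?_
    constructor
    · intro hB₀
      rw [children, mem_filter] at hB₀
      obtain ⟨hB₀F, hB₀S, hnoint⟩ := hB₀
      rcases (hmemF B₀).mp hB₀F with rfl | ⟨B₁, hB₁, hmem⟩
      · exact absurd hB₀S (ssubset_irrefl _)
      have hsubB₁ : B₀ ⊆ B₁ := (mem_TFs.mp (hp B₁ hB₁)).1 B₀ hmem
      by_cases he : B₀ = B₁
      · exact he ▸ hB₁
      · have hB₁F : B₁ ∈ F :=
          (hmemF B₁).mpr (Or.inr ⟨B₁, hB₁, (mem_TFs.mp (hp B₁ hB₁)).2.2.1⟩)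
        exact absurd ⟨B₁, hB₁F, ssubset_of_subset_of_ne hsubB₁ he, hproper B₁ hB₁⟩ hnoint
    · intro hB₀
      rw [children, mem_filter]
      refine ⟨(hmemF B₀).mpr (Or.inr ⟨B₀, hB₀, (mem_TFs.mp (hp B₀ hB₀)).2.2.1⟩),
        hproper B₀ hB₀, ?_⟩
      rintro ⟨C, hCF, hB₀C, hCS⟩
      rcases (hmemF C).mp hCF with rfl | ⟨B₁, hB₁, hCm⟩
      · exact absurd hCS (ssubset_irrefl _)
      have hCB₁ : C ⊆ B₁ := (mem_TFs.mp (hp B₁ hB₁)).1 C hCm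
      by_cases he : B₀ = B₁
      · subst he
        exact hB₀C.not_subset hCB₁
      · obtain ⟨x, hx⟩ := Finset.nonempty_iff_ne_empty.mpr (hPne B₀ hB₀)
        exact (Finset.disjoint_left.mp (hPdis B₀ hB₀ B₁ hB₁ he) hx)
          (hCB₁ (hB₀C.subset hx))
  refine ⟨hTF, hchild, ?_⟩
  intro B hB
  refine Finset.ext fun A => ?_
  rw [mem_filter]
  constructor
  · rintro ⟨hAF, hAB⟩
    rcases (hmemF A).mp hAF with rfl | ⟨B₁, hB₁, hA₁⟩
    · exact absurd (Finset.Subset.antisymm (hPsub B hB) hAB) (hPprop B hB)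
    have hAB₁ : A ⊆ B₁ := (mem_TFs.mp (hp B₁ hB₁)).1 A hA₁
    have hAne : A ≠ ∅ := fun he => (mem_TFs.mp (hp B₁ hB₁)).2.2.2.2 (he ▸ hA₁)
    by_cases he : B = B₁
    · subst he
      exact hA₁
    · obtain ⟨x, hx⟩ := Finset.nonempty_iff_ne_empty.mpr hAne
      exact absurd (hAB₁ hx) (Finset.disjoint_left.mp (hPdis B hB B₁ hB₁ he) (hAB hx))
  · intro hA
    exact ⟨(hmemF A).mpr (Or.inr ⟨B, hB, hA⟩), (mem_TFs.mp (hp B hB)).1 A hA⟩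

lemma sigma_helper {A P : Finset (Finset α)} (g : Finset α → Finset (Finset α))
    (p : ∀ B ∈ P, Finset (Finset α)) (hAP : A = P) (hg : ∀ B (hB : B ∈ P), g B = p B hB) :
    (⟨A, fun B _ => g B⟩ : Σ Q : Finset (Finset α), ∀ B ∈ Q, Finset (Finset α)) = ⟨P, p⟩ := by
  subst hAP
  exact congrArg _ (funext fun B => funext fun hB => hg B hB)

lemma lemA (h : ℕ → K) (h2 : 1 < S.card) :
    trSum h S = ∑ P ∈ PPar S, h P.card * ∏ B ∈ P, trSum h B := by
  have hexp : ∀ P ∈ PPar S, h P.card * ∏ B ∈ P, trSum h B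
      = ∑ p ∈ P.pi (fun B => TFs B), h P.card * ∏ B ∈ P.attach, en h (p B.1 B.2) := by
    intro P _
    simp only [trSum]
    rw [Finset.prod_sum, Finset.mul_sum]
  rw [Finset.sum_congr rfl hexp, Finset.sum_sigma']
  unfold trSum
  refine Finset.sum_bij' (fun F _ => ⟨children F S, fun B _ => F.filter (· ⊆ B)⟩)
    (fun x _ => insert S (x.1.attach.biUnion fun B => x.2 B.1 B.2)) ?_ ?_ ?_ ?_ ?_
  · intro F hF
    have hF' := mem_TFs.mp hF
    refine Finset.mem_sigma.mpr ⟨children_mem_PPar hF' h2, ?_⟩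
    exact Finset.mem_pi.mpr fun B hB => restrict_mem_TFs hF' hB
  · rintro ⟨P, p⟩ hx
    rw [Finset.mem_sigma] at hx
    exact mem_TFs.mpr (reconstruct h2 hx.1 p (Finset.mem_pi.mp hx.2)).1
  · intro F hF
    exact tree_decomp (mem_TFs.mp hF) h2
  · rintro ⟨P, p⟩ hx
    rw [Finset.mem_sigma] at hx
    obtain ⟨_, hb, hc⟩ := reconstruct h2 hx.1 p (Finset.mem_pi.mp hx.2)
    exact sigma_helper _ p hb hc
  · intro F hF
    have := energy_decomp h (mem_TFs.mp hF) h2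
    rw [cc_eq_card_children] at this
    exact this

end TreeDecomp

noncomputable def Tup (k : ℕ) (S : Finset α) : Finset (Fin k → Finset α) :=
  (Fintype.piFinset fun _ : Fin k => S.powerset).filter
    (fun t => (∀ j, t j ≠ ∅) ∧ (∀ i j, i ≠ j → Disjoint (t i) (t j)) ∧ ∀ x ∈ S, ∃ j, x ∈ t j)

lemma mem_Tup {k : ℕ} {S : Finset α} {t : Fin k → Finset α} :
    t ∈ Tup k S ↔ (∀ j, t j ⊆ S) ∧ (∀ j, t j ≠ ∅) ∧
      (∀ i j, i ≠ j → Disjoint (t i) (t j)) ∧ ∀ x ∈ S, ∃ j, x ∈ t j := by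
  unfold Tup
  rw [mem_filter, Fintype.mem_piFinset]
  simp only [mem_powerset]

noncomputable def oSum (h : ℕ → K) (k : ℕ) (S : Finset α) : K :=
  ∑ t ∈ Tup k S, ∏ j, trSum h (t j)

lemma Tup_inj {k : ℕ} {S : Finset α} {t : Fin k → Finset α} (ht : t ∈ Tup k S) :
    Function.Injective t := by
  obtain ⟨_, hne, hdis, _⟩ := mem_Tup.mp ht
  intro i j hij
  by_contra hne'
  have := hdis i j hne'
  rw [hij, disjoint_self] at this
  exact hne j (by simpa using this)

lemma Tup_maps {k : ℕ} {S : Finset α} {t : Fin k → Finset α} (ht : t ∈ Tup k S) :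
    Finset.image t Finset.univ ∈ (Par S).filter (fun P => P.card = k) := by
  obtain ⟨hsub, hne, hdis, hcov⟩ := mem_Tup.mp ht
  refine mem_filter.mpr ⟨mem_Par.mpr ⟨?_, ?_, ?_, ?_⟩, ?_⟩
  · rintro B hB
    obtain ⟨j, _, rfl⟩ := mem_image.mp hB
    exact hsub j
  · rintro B hB
    obtain ⟨j, _, rfl⟩ := mem_image.mp hB
    exact hne j
  · rintro B hB B' hB' hBne
    obtain ⟨j, _, rfl⟩ := mem_image.mp hB
    obtain ⟨j', _, rfl⟩ := mem_image.mp hB'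
    exact hdis j j' (fun he => hBne (he ▸ rfl))
  · intro x hx
    obtain ⟨j, hj⟩ := hcov x hx
    exact ⟨t j, mem_image_of_mem t (mem_univ j), hj⟩
  · rw [Finset.card_image_of_injective _ (Tup_inj ht), Finset.card_univ, Fintype.card_fin]

lemma fiber_card {k : ℕ} {S : Finset α} {P : Finset (Finset α)}
    (hP : P ∈ (Par S).filter (fun P => P.card = k)) :
    ((Tup k S).filter (fun t => Finset.image t Finset.univ = P)).card = k.factorial := by
  obtain ⟨hPar, hcard⟩ := mem_filter.mp hP
  obtain ⟨hPsub, hPne, hPdis, hPcov⟩ := mem_Par.mp hPar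
  have hcard' : Fintype.card {x // x ∈ P} = k := by rw [Fintype.card_coe, hcard]
  have key : ((Tup k S).filter (fun t => Finset.image t Finset.univ = P)).card
      = (Finset.univ : Finset (Fin k ≃ {x // x ∈ P})).card := by
    refine Finset.card_bij' (fun t ht => Equiv.ofBijective
      (fun j => (⟨t j, by
        rw [← (mem_filter.mp ht).2]
        exact mem_image_of_mem t (mem_univ j)⟩ : {x // x ∈ P}))
      ?_) (fun e _ => fun j => (e j : Finset α)) ?_ ?_ ?_ ?_
    · rw [Fintype.bijective_iff_injective_and_card]
      refine ⟨fun i j hij => Tup_inj (mem_filter.mp ht).1 (congrArg Subtype.val hij), ?_⟩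
      rw [hcard', Fintype.card_fin]
    · intro t ht
      exact mem_univ _
    · intro e _
      refine mem_filter.mpr ⟨mem_Tup.mpr ⟨?_, ?_, ?_, ?_⟩, ?_⟩
      · intro j
        exact hPsub _ (e j).2
      · intro j
        exact hPne _ (e j).2
      · intro i j hij
        refine hPdis _ (e i).2 _ (e j).2 ?_
        intro he
        exact hij (e.injective (Subtype.ext he))
      · intro x hx
        obtain ⟨B, hB, hxB⟩ := hPcov x hx
        obtain ⟨j, hj⟩ := e.surjective ⟨B, hB⟩
        exact ⟨j, by show x ∈ (e j : Finset α); rw [hj]; exact hxB⟩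
      · refine Finset.ext fun B => ?_
        rw [mem_image]
        constructor
        · rintro ⟨j, _, rfl⟩
          exact (e j).2
        · intro hB
          obtain ⟨j, hj⟩ := e.surjective ⟨B, hB⟩
          exact ⟨j, mem_univ j, by show (e j : Finset α) = B; rw [hj]⟩
    · intro t ht
      rfl
    · intro e _
      exact Equiv.ext fun j => Subtype.ext rfl
  rw [key, Finset.card_univ, Fintype.card_equiv (Fintype.equivOfCardEq (by
    rw [hcard', Fintype.card_fin])), Fintype.card_fin]

lemma oSum_eq_partitions (h : ℕ → K) (k : ℕ) (S : Finset α) :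
    oSum h k S = k.factorial •
      ∑ P ∈ (Par S).filter (fun P => P.card = k), ∏ B ∈ P, trSum h B := by
  unfold oSum
  rw [← Finset.sum_fiberwise_of_maps_to (fun t ht => Tup_maps ht)
    (fun t => ∏ j, trSum h (t j))]
  rw [Finset.smul_sum]
  refine Finset.sum_congr rfl fun P hP => ?_
  have hconst : ∀ t ∈ (Tup k S).filter (fun t => Finset.image t Finset.univ = P),
      (∏ j, trSum h (t j)) = ∏ B ∈ P, trSum h B := by
    intro t ht
    obtain ⟨ht1, ht2⟩ := mem_filter.mp ht
    rw [← ht2, Finset.prod_image (fun i _ j _ hij => Tup_inj ht1 hij)]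
  rw [Finset.sum_congr rfl hconst, Finset.sum_const, fiber_card hP]

lemma oSum_empty (h : ℕ → K) (k : ℕ) :
    oSum h k (∅ : Finset α) = if k = 0 then 1 else 0 := by
  rcases Nat.eq_zero_or_pos k with rfl | hk
  · rw [if_pos rfl]
    unfold oSum
    have : Tup 0 (∅ : Finset α) = {fun j => j.elim0} := by
      refine Finset.ext fun t => ?_
      rw [mem_Tup, mem_singleton]
      constructor
      · intro _
        exact funext fun j => j.elim0
      · intro _
        exact ⟨fun j => j.elim0, fun j => j.elim0, fun i => i.elim0, fun x hx => absurd hx (notMem_empty x)⟩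
    rw [this, sum_singleton]
    simp
  · rw [if_neg (Nat.pos_iff_ne_zero.mp hk)]
    unfold oSum
    have : Tup k (∅ : Finset α) = ∅ := by
      refine eq_empty_of_forall_notMem fun t ht => ?_
      obtain ⟨hsub, hne, _, _⟩ := mem_Tup.mp ht
      have j0 : Fin k := ⟨0, hk⟩
      exact hne j0 (Finset.subset_empty.mp (hsub j0))
    rw [this, sum_empty]

lemma oSum_image_aux (h : ℕ → K) (f : α → β) (g : β → α) (hf : Function.Injective f)
    (hgf : ∀ a, g (f a) = a) (k : ℕ) (S : Finset α) :
    oSum h k (S.image f) = oSum h k S := by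
  unfold oSum
  refine (Finset.sum_bij' (fun t _ => fun j => (t j).image f)
    (fun t' _ => fun j => (t' j).image g) ?_ ?_ ?_ ?_ ?_).symm
  · intro t ht
    obtain ⟨hsub, hne, hdis, hcov⟩ := mem_Tup.mp ht
    refine mem_Tup.mpr ⟨fun j => Finset.image_subset_image (hsub j),
      fun j he => hne j (Finset.image_eq_empty.mp he),
      fun i j hij => (Finset.disjoint_image hf).mpr (hdis i j hij), ?_⟩
    intro b hb
    obtain ⟨a, ha, rfl⟩ := mem_image.mp hb
    obtain ⟨j, hj⟩ := hcov a ha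
    exact ⟨j, mem_image_of_mem f hj⟩
  · intro t' ht'
    obtain ⟨hsub, hne, hdis, hcov⟩ := mem_Tup.mp ht'
    have hrange : ∀ j, ∀ b ∈ t' j, f (g b) = b := by
      intro j b hb
      obtain ⟨a, _, rfl⟩ := mem_image.mp (hsub j hb)
      rw [hgf]
    refine mem_Tup.mpr ⟨?_, fun j he => hne j (Finset.image_eq_empty.mp he), ?_, ?_⟩
    · intro j x hx
      obtain ⟨b, hb, rfl⟩ := mem_image.mp hx
      obtain ⟨a, ha, rfl⟩ := mem_image.mp (hsub j hb)
      rw [hgf]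
      exact ha
    · intro i j hij
      rw [Finset.disjoint_left]
      intro x hx hx'
      obtain ⟨b, hb, rfl⟩ := mem_image.mp hx
      obtain ⟨b', hb', hbb⟩ := mem_image.mp hx'
      have : b' = b := by rw [← hrange j b' hb', hbb, hrange i b hb]
      subst this
      exact Finset.disjoint_left.mp (hdis i j hij) hb hb'
    · intro a ha
      obtain ⟨j, hj⟩ := hcov (f a) (mem_image_of_mem f ha)
      exact ⟨j, by rw [← hgf a]; exact mem_image_of_mem g hj⟩
  · intro t ht
    funext j
    show ((t j).image f).image g = t j
    rw [Finset.image_image]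
    refine Finset.ext fun a => ?_
    simp only [mem_image, Function.comp_apply]
    constructor
    · rintro ⟨a', ha', rfl⟩
      rw [hgf]
      exact ha'
    · intro ha
      exact ⟨a, ha, by rw [hgf]⟩
  · intro t' ht'
    obtain ⟨hsub, _, _, _⟩ := mem_Tup.mp ht'
    funext j
    show ((t' j).image g).image f = t' j
    rw [Finset.image_image]
    refine Finset.ext fun b => ?_
    simp only [mem_image, Function.comp_apply]
    constructor
    · rintro ⟨b', hb', rfl⟩
      obtain ⟨a, _, rfl⟩ := mem_image.mp (hsub j hb')
      rw [hgf]
      exact hb'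
    · intro hb
      obtain ⟨a, _, rfl⟩ := mem_image.mp (hsub j hb)
      exact ⟨f a, hb, by rw [hgf]⟩
  · intro t _
    exact (Finset.prod_congr rfl fun j _ => (trSum_image f h hf (t j)).symm)

lemma oSum_image (h : ℕ → K) (f : α → β) (hf : Function.Injective f) (k : ℕ) (S : Finset α) :
    oSum h k (S.image f) = oSum h k S := by
  rcases Finset.eq_empty_or_nonempty S with rfl | ⟨a, ha⟩
  · rw [Finset.image_empty, oSum_empty, oSum_empty]
  · have : Nonempty α := ⟨a⟩
    exact oSum_image_aux h f (Function.invFun f) hf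
      (fun x => Function.leftInverse_invFun hf x) k S

lemma oSum_succ (h : ℕ → K) (k : ℕ) (S : Finset α) :
    oSum h (k + 1) S = ∑ B ∈ S.powerset, trSum h B * oSum h k (S \ B) := by
  have hzero : ∀ B ∈ S.powerset, trSum h B * oSum h k (S \ B) ≠ 0 → B ≠ ∅ := by
    intro B _ hB he
    subst he
    rw [trSum_empty, zero_mul] at hB
    exact hB rfl
  rw [← Finset.sum_filter_of_ne hzero]
  have hexp : ∀ B ∈ S.powerset.filter (· ≠ ∅), trSum h B * oSum h k (S \ B)
      = ∑ t' ∈ Tup k (S \ B), trSum h B * ∏ j, trSum h (t' j) := by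
    intro B _
    rw [oSum, Finset.mul_sum]
  rw [Finset.sum_congr rfl hexp, Finset.sum_sigma']
  unfold oSum
  refine Finset.sum_bij' (fun t _ => ⟨t (Fin.last k), fun j => t j.castSucc⟩)
    (fun x _ => Fin.snoc x.2 x.1) ?_ ?_ ?_ ?_ ?_
  · intro t ht
    obtain ⟨hsub, hne, hdis, hcov⟩ := mem_Tup.mp ht
    refine Finset.mem_sigma.mpr ⟨mem_filter.mpr ⟨mem_powerset.mpr (hsub _), hne _⟩,
      mem_Tup.mpr ⟨?_, fun j => hne _, ?_, ?_⟩⟩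
    · intro j x hx
      rw [mem_sdiff]
      refine ⟨hsub _ hx, fun hx' => ?_⟩
      exact Finset.disjoint_left.mp (hdis j.castSucc (Fin.last k) (Fin.castSucc_lt_last j).ne) hx hx'
    · intro i j hij
      exact hdis i.castSucc j.castSucc (fun he => hij (Fin.castSucc_inj.mp he))
    · intro x hx
      rw [mem_sdiff] at hx
      obtain ⟨j, hj⟩ := hcov x hx.1
      rcases Fin.eq_castSucc_or_eq_last j with ⟨j₀, rfl⟩ | rfl
      · exact ⟨j₀, hj⟩
      · exact absurd hj hx.2
  · rintro ⟨B, t'⟩ hx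
    dsimp only
    rw [Finset.mem_sigma] at hx
    obtain ⟨hB, ht'⟩ := hx
    rw [mem_filter, mem_powerset] at hB
    obtain ⟨hsub, hne, hdis, hcov⟩ := mem_Tup.mp ht'
    refine mem_Tup.mpr ⟨?_, ?_, ?_, ?_⟩
    · intro j
      rcases Fin.eq_castSucc_or_eq_last j with ⟨j₀, rfl⟩ | rfl
      · rw [Fin.snoc_castSucc]
        exact (hsub j₀).trans (Finset.sdiff_subset)
      · rw [Fin.snoc_last]
        exact hB.1
    · intro j
      rcases Fin.eq_castSucc_or_eq_last j with ⟨j₀, rfl⟩ | rfl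
      · rw [Fin.snoc_castSucc]
        exact hne j₀
      · rw [Fin.snoc_last]
        exact hB.2
    · intro i j hij
      rcases Fin.eq_castSucc_or_eq_last i with ⟨i₀, rfl⟩ | rfl <;>
        rcases Fin.eq_castSucc_or_eq_last j with ⟨j₀, rfl⟩ | rfl
      · rw [Fin.snoc_castSucc, Fin.snoc_castSucc]
        exact hdis i₀ j₀ (fun he => hij (he ▸ rfl))
      · rw [Fin.snoc_castSucc, Fin.snoc_last]
        rw [Finset.disjoint_left]
        intro x hx
        exact (mem_sdiff.mp (hsub i₀ hx)).2
      · rw [Fin.snoc_castSucc, Fin.snoc_last]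
        rw [Finset.disjoint_right]
        intro x hx
        exact (mem_sdiff.mp (hsub j₀ hx)).2
      · exact absurd rfl hij
    · intro x hx
      by_cases hxB : x ∈ B
      · exact ⟨Fin.last k, by rw [Fin.snoc_last]; exact hxB⟩
      · obtain ⟨j₀, hj₀⟩ := hcov x (mem_sdiff.mpr ⟨hx, hxB⟩)
        exact ⟨j₀.castSucc, by rw [Fin.snoc_castSucc]; exact hj₀⟩
  · intro t _
    funext j
    rcases Fin.eq_castSucc_or_eq_last j with ⟨j₀, rfl⟩ | rfl
    · exact Fin.snoc_castSucc _ _ _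
    · exact Fin.snoc_last _ _
  · rintro ⟨B, t'⟩ _
    dsimp only
    have h1 : (Fin.snoc t' B : Fin (k+1) → Finset α) (Fin.last k) = B := Fin.snoc_last _ _
    have h2 : (fun j : Fin k => (Fin.snoc t' B : Fin (k+1) → Finset α) j.castSucc) = t' :=
      funext fun j => Fin.snoc_castSucc _ _ _
    rw [Sigma.mk.inj_iff]
    exact ⟨h1, heq_of_eq h2⟩
  · intro t _
    rw [Fin.prod_univ_castSucc]
    exact mul_comm _ _

noncomputable def tnat (h : ℕ → K) (m : ℕ) : K := trSum h (Finset.univ : Finset (Fin m))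

noncomputable def onat (h : ℕ → K) (k m : ℕ) : K := oSum h k (Finset.univ : Finset (Fin m))

lemma exists_emb {n : ℕ} (B : Finset (Fin n)) :
    ∃ f : Fin B.card → Fin n, Function.Injective f ∧
      (Finset.univ : Finset (Fin B.card)).image f = B := by
  refine ⟨fun i => ↑(B.orderIsoOfFin rfl i),
    fun i j hij => (B.orderIsoOfFin rfl).injective (Subtype.ext hij), ?_⟩
  refine Finset.ext fun x => ?_
  rw [mem_image]
  constructor
  · rintro ⟨i, _, rfl⟩
    exact (B.orderIsoOfFin rfl i).2
  · intro hx
    exact ⟨(B.orderIsoOfFin rfl).symm ⟨x, hx⟩, mem_univ _, by simp⟩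

lemma trSum_card (h : ℕ → K) {n : ℕ} (B : Finset (Fin n)) : trSum h B = tnat h B.card := by
  obtain ⟨f, hf, himg⟩ := exists_emb B
  have := trSum_image f h hf (Finset.univ : Finset (Fin B.card))
  rw [himg] at this
  exact this

lemma oSum_card (h : ℕ → K) (k : ℕ) {n : ℕ} (B : Finset (Fin n)) :
    oSum h k B = onat h k B.card := by
  obtain ⟨f, hf, himg⟩ := exists_emb B
  have := oSum_image h f hf k (Finset.univ : Finset (Fin B.card))
  rw [himg] at this
  exact this

lemma oSum_zero_nonempty (h : ℕ → K) {S : Finset α} (hS : S.Nonempty) : oSum h 0 S = 0 := by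
  unfold oSum
  have : Tup 0 S = ∅ := by
    refine eq_empty_of_forall_notMem fun t ht => ?_
    obtain ⟨x, hx⟩ := hS
    obtain ⟨j, _⟩ := (mem_Tup.mp ht).2.2.2 x hx
    exact j.elim0
  rw [this, sum_empty]

lemma onat_succ (h : ℕ → K) (k n : ℕ) :
    onat h (k + 1) n = ∑ a ∈ Finset.range (n + 1), (n.choose a) • (tnat h a * onat h k (n - a)) := by
  have hcu : (Finset.univ : Finset (Fin n)).card = n := by simp
  unfold onat
  rw [oSum_succ, Finset.sum_powerset, hcu]
  refine Finset.sum_congr rfl fun a ha => ?_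
  have hconst : ∀ B ∈ Finset.powersetCard a (Finset.univ : Finset (Fin n)),
      trSum h B * oSum h k (Finset.univ \ B) = tnat h a * onat h k (n - a) := by
    intro B hB
    obtain ⟨_, hcard⟩ := Finset.mem_powersetCard.mp hB
    rw [trSum_card h B, hcard, oSum_card h k (Finset.univ \ B),
      Finset.card_sdiff_of_subset (Finset.subset_univ B), hcard, hcu]
  rw [Finset.sum_congr rfl hconst, Finset.sum_const, Finset.card_powersetCard, hcu]
  rfl

lemma PPar_card_bounds {S : Finset α} (h2 : 1 < S.card) {P : Finset (Finset α)}
    (hP : P ∈ PPar S) : 2 ≤ P.card ∧ P.card ≤ S.card := by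
  obtain ⟨⟨hPsub, hPne, hPdis, hPcov⟩, hPprop⟩ := mem_PPar.mp hP
  have hbu : P.biUnion id = S := by
    refine Finset.ext fun x => ?_
    rw [mem_biUnion]
    exact ⟨fun ⟨B, hB, hx⟩ => hPsub B hB hx, fun hx => hPcov x hx⟩
  have hcardS : ∑ B ∈ P, B.card = S.card := by
    rw [← hbu]
    exact (Finset.card_biUnion fun x hx y hy hxy => hPdis x hx y hy hxy).symm
  have hle : P.card ≤ S.card := by
    rw [← hcardS, Finset.card_eq_sum_ones]
    exact Finset.sum_le_sum fun B hB =>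
      Nat.one_le_iff_ne_zero.mpr fun hc => hPne B hB (Finset.card_eq_zero.mp hc)
  refine ⟨?_, hle⟩
  obtain ⟨x, hx⟩ : S.Nonempty := Finset.card_pos.mp (by omega)
  obtain ⟨B, hB, hxB⟩ := hPcov x hx
  by_contra hlt
  push_neg at hlt
  have h1 : P.card = 1 := by
    have : 0 < P.card := Finset.card_pos.mpr ⟨B, hB⟩
    omega
  obtain ⟨B₀, hB₀⟩ := Finset.card_eq_one.mp h1
  subst hB₀
  rw [mem_singleton] at hB
  subst hB
  refine hPprop B (mem_singleton_self B) (Finset.Subset.antisymm (hPsub B (mem_singleton_self B)) ?_)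
  intro y hy
  obtain ⟨B', hB', hyB'⟩ := hPcov y hy
  rw [mem_singleton] at hB'
  exact hB' ▸ hyB'

lemma Par_filter_eq {S : Finset α} {k : ℕ} (hk : 2 ≤ k) :
    (Par S).filter (fun P => P.card = k) = (PPar S).filter (fun P => P.card = k) := by
  refine Finset.ext fun P => ?_
  rw [mem_filter, mem_filter, mem_PPar, mem_Par]
  constructor
  · rintro ⟨hPar, hcard⟩
    refine ⟨⟨hPar, ?_⟩, hcard⟩
    intro B hB hBS
    have h1 : 1 < P.card := by omega
    obtain ⟨B', hB', hne⟩ := Finset.exists_mem_ne h1 B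
    obtain ⟨x, hx⟩ := Finset.nonempty_iff_ne_empty.mpr (hPar.2.1 B' hB')
    exact Finset.disjoint_left.mp (hPar.2.2.1 B' hB' B hB hne) hx (hBS ▸ hPar.1 B' hB' hx)
  · rintro ⟨⟨hPar, _⟩, hcard⟩
    exact ⟨hPar, hcard⟩

end Comb

section QAlg
open Finset
variable {K : Type*} [CommRing K] [Algebra ℚ K]

lemma tnat_zero (h : ℕ → K) : tnat h 0 = 0 := by
  rw [tnat, Finset.univ_eq_empty, trSum_empty]

lemma tnat_one (h : ℕ → K) : tnat h 1 = 1 := by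
  rw [tnat, Finset.univ_unique, trSum_singleton]

lemma tnat_eq (h : ℕ → K) {n : ℕ} (h2 : 2 ≤ n) :
    tnat h n = ∑ k ∈ Finset.Icc 2 n,
      algebraMap ℚ K ((k.factorial : ℚ)⁻¹) * h k * onat h k n := by
  have hcu : (Finset.univ : Finset (Fin n)).card = n := by simp
  have h2' : 1 < (Finset.univ : Finset (Fin n)).card := by omega
  have hmaps : ∀ P ∈ PPar (Finset.univ : Finset (Fin n)), P.card ∈ Finset.Icc 2 n := by
    intro P hP
    obtain ⟨ha, hb⟩ := PPar_card_bounds h2' hP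
    rw [Finset.mem_Icc]
    omega
  have key : ∀ k ∈ Finset.Icc 2 n, algebraMap ℚ K ((k.factorial : ℚ)⁻¹) * h k * onat h k n
      = ∑ P ∈ (PPar (Finset.univ : Finset (Fin n))).filter (fun P => P.card = k),
          h P.card * ∏ B ∈ P, trSum h B := by
    intro k hk
    rw [Finset.mem_Icc] at hk
    have hB1 : onat h k n = k.factorial •
        ∑ P ∈ (Par (Finset.univ : Finset (Fin n))).filter (fun P => P.card = k),
          ∏ B ∈ P, trSum h B := oSum_eq_partitions h k _
    rw [hB1, Par_filter_eq hk.1]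
    have hcongr : ∀ P ∈ (PPar (Finset.univ : Finset (Fin n))).filter (fun P => P.card = k),
        h P.card * ∏ B ∈ P, trSum h B = h k * ∏ B ∈ P, trSum h B := by
      intro P hP
      rw [(mem_filter.mp hP).2]
    rw [Finset.sum_congr rfl hcongr, ← Finset.mul_sum, nsmul_eq_mul]
    have hone : algebraMap ℚ K ((k.factorial : ℚ)⁻¹) * ((k.factorial : ℕ) : K) = 1 := by
      rw [← map_natCast (algebraMap ℚ K) k.factorial, ← map_mul,
        inv_mul_cancel₀ (Nat.cast_ne_zero.mpr (Nat.factorial_ne_zero k)), map_one]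
    calc algebraMap ℚ K ((k.factorial : ℚ)⁻¹) * h k
          * (((k.factorial : ℕ) : K) * ∑ P ∈ (PPar (Finset.univ : Finset (Fin n))).filter
              (fun P => P.card = k), ∏ B ∈ P, trSum h B)
        = (algebraMap ℚ K ((k.factorial : ℚ)⁻¹) * ((k.factorial : ℕ) : K))
            * (h k * ∑ P ∈ (PPar (Finset.univ : Finset (Fin n))).filter
              (fun P => P.card = k), ∏ B ∈ P, trSum h B) := by ring
      _ = h k * ∑ P ∈ (PPar (Finset.univ : Finset (Fin n))).filter
              (fun P => P.card = k), ∏ B ∈ P, trSum h B := by rw [hone, one_mul]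
  calc tnat h n = ∑ P ∈ PPar (Finset.univ : Finset (Fin n)), h P.card * ∏ B ∈ P, trSum h B :=
        lemA h h2'
    _ = ∑ k ∈ Finset.Icc 2 n,
        ∑ P ∈ (PPar (Finset.univ : Finset (Fin n))).filter (fun P => P.card = k),
          h P.card * ∏ B ∈ P, trSum h B :=
        (Finset.sum_fiberwise_of_maps_to hmaps _).symm
    _ = ∑ k ∈ Finset.Icc 2 n, algebraMap ℚ K ((k.factorial : ℚ)⁻¹) * h k * onat h k n :=
        (Finset.sum_congr rfl key).symm

noncomputable def Gser (h : ℕ → K) : PowerSeries K :=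
  PowerSeries.mk fun m => algebraMap ℚ K ((m.factorial : ℚ)⁻¹) * tnat h m

lemma coeff_Gser (h : ℕ → K) (m : ℕ) :
    PowerSeries.coeff m (Gser h) = algebraMap ℚ K ((m.factorial : ℚ)⁻¹) * tnat h m :=
  PowerSeries.coeff_mk m _

lemma coeff_Gser_pow (h : ℕ → K) (k n : ℕ) :
    PowerSeries.coeff n ((Gser h) ^ k)
      = algebraMap ℚ K ((n.factorial : ℚ)⁻¹) * onat h k n := by
  induction k generalizing n with
  | zero =>
    rw [pow_zero, PowerSeries.coeff_one]
    rcases Nat.eq_zero_or_pos n with rfl | hn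
    · rw [if_pos rfl]
      have h1 : onat h 0 0 = 1 := by
        rw [onat, Finset.univ_eq_empty, oSum_empty, if_pos rfl]
      rw [h1, mul_one, Nat.factorial_zero]
      norm_num
    · rw [if_neg (by omega)]
      have : Nonempty (Fin n) := ⟨⟨0, hn⟩⟩
      have h1 : onat h 0 n = 0 := oSum_zero_nonempty h Finset.univ_nonempty
      rw [h1, mul_zero]
  | succ k ih =>
    rw [pow_succ', PowerSeries.coeff_mul, Finset.Nat.sum_antidiagonal_eq_sum_range_succ_mk,
      onat_succ, Finset.mul_sum]
    refine Finset.sum_congr rfl fun a ha => ?_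
    rw [Finset.mem_range] at ha
    have han : a ≤ n := by omega
    rw [coeff_Gser, ih]
    have hfact : ((a.factorial : ℚ))⁻¹ * (((n - a).factorial : ℚ))⁻¹
        = (n.factorial : ℚ)⁻¹ * (n.choose a : ℚ) := by
      have h1 := Nat.choose_mul_factorial_mul_factorial han
      have h2 : ((n.choose a : ℚ)) * (a.factorial : ℚ) * (((n - a).factorial : ℚ))
          = (n.factorial : ℚ) := by exact_mod_cast congrArg (Nat.cast : ℕ → ℚ) h1
      have ha0 : (a.factorial : ℚ) ≠ 0 := Nat.cast_ne_zero.mpr (Nat.factorial_ne_zero a)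
      have hb0 : (((n - a).factorial : ℚ)) ≠ 0 := Nat.cast_ne_zero.mpr (Nat.factorial_ne_zero _)
      have hn0 : ((n.factorial : ℚ)) ≠ 0 := Nat.cast_ne_zero.mpr (Nat.factorial_ne_zero n)
      field_simp
      linear_combination -h2
    calc (algebraMap ℚ K ((a.factorial : ℚ)⁻¹) * tnat h a)
          * (algebraMap ℚ K (((n - a).factorial : ℚ)⁻¹) * onat h k (n - a))
        = algebraMap ℚ K ((a.factorial : ℚ)⁻¹ * (((n - a).factorial : ℚ))⁻¹)
            * (tnat h a * onat h k (n - a)) := by rw [map_mul]; ring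
      _ = algebraMap ℚ K ((n.factorial : ℚ)⁻¹ * (n.choose a : ℚ))
            * (tnat h a * onat h k (n - a)) := by rw [hfact]
      _ = algebraMap ℚ K ((n.factorial : ℚ)⁻¹)
            * ((n.choose a) • (tnat h a * onat h k (n - a))) := by
          rw [map_mul, map_natCast, nsmul_eq_mul]
          ring

lemma coeff_Gser_main (h : ℕ → K) {n : ℕ} (hn : 1 ≤ n) :
    PowerSeries.coeff n (Gser h) = (if n = 1 then 1 else 0)
      + ∑ k ∈ Finset.Icc 2 n,
          algebraMap ℚ K ((k.factorial : ℚ)⁻¹) * h k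
            * PowerSeries.coeff n ((Gser h) ^ k) := by
  rcases eq_or_lt_of_le hn with he | h2
  · rw [coeff_Gser, ← he]
    rw [if_pos rfl]
    have : Finset.Icc 2 1 = (∅ : Finset ℕ) := by decide
    rw [this, Finset.sum_empty, add_zero, tnat_one, Nat.factorial_one, mul_one]
    norm_num
  · have h2' : 2 ≤ n := h2
    rw [if_neg (by omega), zero_add, coeff_Gser, tnat_eq h h2', Finset.mul_sum]
    refine Finset.sum_congr rfl fun k hk => ?_
    rw [coeff_Gser_pow]
    ring

end QAlg


section Final
open Finset
variable {K : Type*} [CommRing K] [Algebra ℚ K]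

lemma hrec_of_inv (h : ℕ → K) (f u : PowerSeries K)
    (hfdef : f = PowerSeries.mk fun k =>
      if k = 1 then 1 else
      if 2 ≤ k then -(algebraMap ℚ K ((k.factorial : ℚ)⁻¹) * h k) else 0)
    (hinv : pcomp f u = PowerSeries.X) :
    ∀ n, 1 ≤ n → PowerSeries.coeff n u = (if n = 1 then 1 else 0)
      + ∑ k ∈ Finset.Icc 2 n,
          algebraMap ℚ K ((k.factorial : ℚ)⁻¹) * h k * PowerSeries.coeff n (u ^ k) := by
  intro n hn
  have hc := congrArg (PowerSeries.coeff n) hinv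
  rw [pcomp, PowerSeries.coeff_mk, PowerSeries.coeff_X] at hc
  have hsplit : Finset.range (n + 1) = insert 0 (insert 1 (Finset.Icc 2 n)) := by
    refine Finset.ext fun m => ?_
    simp only [Finset.mem_range, Finset.mem_insert, Finset.mem_Icc]
    omega
  have h0 : (0 : ℕ) ∉ insert 1 (Finset.Icc 2 n) := by
    simp only [Finset.mem_insert, Finset.mem_Icc]
    omega
  have h1 : (1 : ℕ) ∉ Finset.Icc 2 n := by
    simp only [Finset.mem_Icc]
    omega
  rw [hsplit, Finset.sum_insert h0, Finset.sum_insert h1] at hc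
  have hf0 : PowerSeries.coeff 0 f = 0 := by
    rw [hfdef, PowerSeries.coeff_mk]
    norm_num
  have hf1 : PowerSeries.coeff 1 f = 1 := by
    rw [hfdef, PowerSeries.coeff_mk]
    norm_num
  have hfk : ∀ k ∈ Finset.Icc 2 n, PowerSeries.coeff k f * PowerSeries.coeff n (u ^ k)
      = -(algebraMap ℚ K ((k.factorial : ℚ)⁻¹) * h k * PowerSeries.coeff n (u ^ k)) := by
    intro k hk
    rw [Finset.mem_Icc] at hk
    have : PowerSeries.coeff k f = -(algebraMap ℚ K ((k.factorial : ℚ)⁻¹) * h k) := by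
      rw [hfdef, PowerSeries.coeff_mk]
      rw [if_neg (by omega), if_pos hk.1]
    rw [this]
    ring
  rw [hf0, hf1, zero_mul, one_mul, pow_one, Finset.sum_congr rfl hfk,
    Finset.sum_neg_distrib] at hc
  linear_combination hc

lemma coeff_pow_zero_of_lt (u : PowerSeries K) (hu : PowerSeries.constantCoeff u = 0)
    {m k : ℕ} (hmk : m < k) : PowerSeries.coeff m (u ^ k) = 0 :=
  PowerSeries.X_pow_dvd_iff.mp (pow_dvd_pow_of_dvd (PowerSeries.X_dvd_iff.mpr hu) k) m hmk

lemma agree_pow (u v : PowerSeries K) (hu0 : PowerSeries.constantCoeff u = 0)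
    (hv0 : PowerSeries.constantCoeff v = 0) :
    ∀ k, 1 ≤ k → ∀ n, (∀ m, m + k ≤ n + 1 → PowerSeries.coeff m u = PowerSeries.coeff m v) →
      PowerSeries.coeff n (u ^ k) = PowerSeries.coeff n (v ^ k) := by
  intro k
  induction k with
  | zero => omega
  | succ k ih =>
    intro _ n hagree
    rcases Nat.eq_zero_or_pos k with rfl | hk
    · rw [pow_one, pow_one]
      exact hagree n (by omega)
    · rw [pow_succ', pow_succ', PowerSeries.coeff_mul, PowerSeries.coeff_mul]
      refine Finset.sum_congr rfl fun p hp => ?_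
      have hpsum : p.1 + p.2 = n := Finset.HasAntidiagonal.mem_antidiagonal.mp hp
      by_cases hb : p.2 < k
      · rw [coeff_pow_zero_of_lt u hu0 hb, coeff_pow_zero_of_lt v hv0 hb, mul_zero, mul_zero]
      · push_neg at hb
        by_cases hp1 : p.1 = 0
        · rw [hp1]
          rw [show (PowerSeries.coeff 0) u = 0 by
              rw [PowerSeries.coeff_zero_eq_constantCoeff]; exact hu0,
            show (PowerSeries.coeff 0) v = 0 by
              rw [PowerSeries.coeff_zero_eq_constantCoeff]; exact hv0,
            zero_mul, zero_mul]
        · have h1 : PowerSeries.coeff p.1 u = PowerSeries.coeff p.1 v :=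
            hagree p.1 (by omega)
          have h2 : PowerSeries.coeff p.2 (u ^ k) = PowerSeries.coeff p.2 (v ^ k) :=
            ih hk p.2 (fun m hm => hagree m (by omega))
          rw [h1, h2]

lemma series_unique (h : ℕ → K) (u v : PowerSeries K)
    (hu0 : PowerSeries.constantCoeff u = 0) (hv0 : PowerSeries.constantCoeff v = 0)
    (hru : ∀ n, 1 ≤ n → PowerSeries.coeff n u = (if n = 1 then 1 else 0)
      + ∑ k ∈ Finset.Icc 2 n,
          algebraMap ℚ K ((k.factorial : ℚ)⁻¹) * h k * PowerSeries.coeff n (u ^ k))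
    (hrv : ∀ n, 1 ≤ n → PowerSeries.coeff n v = (if n = 1 then 1 else 0)
      + ∑ k ∈ Finset.Icc 2 n,
          algebraMap ℚ K ((k.factorial : ℚ)⁻¹) * h k * PowerSeries.coeff n (v ^ k)) :
    ∀ n, PowerSeries.coeff n u = PowerSeries.coeff n v := by
  intro n
  induction n using Nat.strong_induction_on with
  | _ n ihn =>
    rcases Nat.eq_zero_or_pos n with rfl | hn
    · rw [PowerSeries.coeff_zero_eq_constantCoeff]
      rw [hu0, hv0]
    · rw [hru n hn, hrv n hn]
      congr 1
      refine Finset.sum_congr rfl fun k hk => ?_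
      rw [Finset.mem_Icc] at hk
      congr 1
      exact agree_pow u v hu0 hv0 k (by omega) n (fun m hm => ihn m (by omega))

lemma constantCoeff_Gser (h : ℕ → K) : PowerSeries.constantCoeff (Gser h) = 0 := by
  rw [← PowerSeries.coeff_zero_eq_constantCoeff]
  rw [coeff_Gser, tnat_zero, mul_zero]

lemma TFs_univ_eq (k : ℕ) :
    TFs (Finset.univ : Finset (Fin k))
      = (Finset.univ : Finset (Finset (Finset (Fin k)))).filter IsTreeFam := by
  refine Finset.ext fun F => ?_
  rw [mem_TFs, Finset.mem_filter]
  constructor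
  · rintro ⟨hsub, hlam, hu, hsing, hemp⟩
    exact ⟨Finset.mem_univ F, hlam, hu, fun i => hsing i (Finset.mem_univ i), hemp⟩
  · rintro ⟨_, hlam, hu, hsing, hemp⟩
    exact ⟨fun A _ => Finset.subset_univ A, hlam, hu, fun i _ => hsing i, hemp⟩

lemma en_eq_treeEnergy {k : ℕ} (h : ℕ → K) (F : Finset (Finset (Fin k))) :
    en h F = treeEnergy h F := by
  unfold en treeEnergy
  refine Finset.prod_congr rfl fun A _ => ?_
  congr 1

lemma tnat_eq_statement (h : ℕ → K) (k : ℕ) :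
    tnat h k = ∑ F ∈ (Finset.univ : Finset (Finset (Finset (Fin k)))).filter IsTreeFam,
      treeEnergy h F := by
  rw [tnat, trSum, TFs_univ_eq]
  exact Finset.sum_congr rfl fun F _ => en_eq_treeEnergy h F

end Final


/-- if `g` is the compositional inverse of
`f(X) = X - ∑_{k≥2} (hₖ/k!) Xᵏ`, then `g₀ = 0`, `g₁ = 1` and for `k ≥ 2`,
`gₖ = ∑_{T ∈ 𝕊ₖ} E_h(T)` (in exponential normalization `g(X) = ∑ (gₖ/k!) Xᵏ`). -/
theorem inversion_one_dimensional {K : Type*} [CommRing K] [Algebra ℚ K]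
    (h : ℕ → K) (g : PowerSeries K)
    (f : PowerSeries K)
    (hfdef : f = PowerSeries.mk fun k =>
      if k = 1 then 1 else
      if 2 ≤ k then -(algebraMap ℚ K ((k.factorial : ℚ)⁻¹) * h k) else 0)
    (hg0 : PowerSeries.constantCoeff g = 0)
    (hinv₁ : pcomp f g = PowerSeries.X) (hinv₂ : pcomp g f = PowerSeries.X) :
    PowerSeries.coeff 0 g = 0 ∧ PowerSeries.coeff 1 g = 1 ∧
      ∀ k : ℕ, 2 ≤ k →
        PowerSeries.coeff k g =
          algebraMap ℚ K ((k.factorial : ℚ)⁻¹) *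
            ∑ F ∈ (Finset.univ : Finset (Finset (Finset (Fin k)))).filter IsTreeFam,
              treeEnergy h F := by
  have hrec_g := hrec_of_inv h f g hfdef hinv₁
  have hrec_G : ∀ n, 1 ≤ n → PowerSeries.coeff n (Gser h) = (if n = 1 then 1 else 0)
      + ∑ k ∈ Finset.Icc 2 n,
          algebraMap ℚ K ((k.factorial : ℚ)⁻¹) * h k * PowerSeries.coeff n ((Gser h) ^ k) :=
    fun n hn => coeff_Gser_main h hn
  have huniq := series_unique h g (Gser h) hg0 (constantCoeff_Gser h) hrec_g hrec_G
  refine ⟨?_, ?_, ?_⟩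
  · rw [PowerSeries.coeff_zero_eq_constantCoeff]
    exact hg0
  · rw [huniq 1, coeff_Gser, tnat_one, mul_one, Nat.factorial_one]
    norm_num
  · intro k hk
    rw [huniq k, coeff_Gser, tnat_eq_statement]
end

section
/- Define Φ on sequences H = (h_k)_{k≥2} with values in a commutative ring by Φ(H)_k := −∑_{T ∈ S_k} E_h(T), where S_k is the set of leaf-labelled rooted trees with k leaves in which every internal vertex has at least two children, and E_h(T) = ∏_{v internal} h_{(number of children of v)}. Then Φ is an involution: Φ(Φ(H)) = H. -/
open scoped Classical

/-- The map `Φ(H)ₖ := - ∑_{T ∈ 𝕊ₖ} E_H(T)`. -/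
noncomputable def Phi {K : Type*} [CommRing K] (h : ℕ → K) : ℕ → K := fun k =>
  -∑ F ∈ (Finset.univ : Finset (Finset (Finset (Fin k)))).filter IsTreeFam, treeEnergy h F

namespace PhiInv

open Finset

variable {k : ℕ}

/-- children of `A` in `F`. -/
def children (F : Finset (Finset (Fin k))) (A : Finset (Fin k)) : Finset (Finset (Fin k)) :=
  F.filter fun B => B ⊂ A ∧ ¬ ∃ C ∈ F, B ⊂ C ∧ C ⊂ A

lemma childCount_eq (F : Finset (Finset (Fin k))) (A : Finset (Fin k)) :
    childCount F A = (children F A).card := rfl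

def Internals (F : Finset (Finset (Fin k))) : Finset (Finset (Fin k)) :=
  F.filter fun A => 1 < A.card

lemma mem_children {F : Finset (Finset (Fin k))} {A B : Finset (Fin k)} :
    B ∈ children F A ↔ B ∈ F ∧ B ⊂ A ∧ ¬ ∃ C ∈ F, B ⊂ C ∧ C ⊂ A := by
  simp [children, and_assoc]

lemma mem_Internals {F : Finset (Finset (Fin k))} {A : Finset (Fin k)} :
    A ∈ Internals F ↔ A ∈ F ∧ 1 < A.card := by simp [Internals]

variable {F : Finset (Finset (Fin k))} (hF : IsTreeFam F)

lemma child_mem {A B : Finset (Fin k)} (h : B ∈ children F A) : B ∈ F := (mem_children.1 h).1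

lemma child_ssubset {A B : Finset (Fin k)} (h : B ∈ children F A) : B ⊂ A := (mem_children.1 h).2.1

include hF in
lemma child_nonempty {A B : Finset (Fin k)} (h : B ∈ children F A) : B.Nonempty := by
  rcases Finset.eq_empty_or_nonempty B with rfl | h'
  · exact absurd (child_mem h) hF.2.2.2
  · exact h'

include hF in
/-- every proper `F`-subset of `A` lies in a child of `A` -/
lemma exists_child_superset {A B : Finset (Fin k)} (hB : B ∈ F) (hBA : B ⊂ A) :
    ∃ C ∈ children F A, B ⊆ C := by
  classical
  have hne : (F.filter fun C => B ⊆ C ∧ C ⊂ A).Nonempty := ⟨B, by simp [hB, hBA]⟩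
  obtain ⟨M, hM, hmax⟩ : ∃ M ∈ (F.filter fun C => B ⊆ C ∧ C ⊂ A), ∀ x ∈ (F.filter fun C => B ⊆ C ∧ C ⊂ A), ¬ M < x := by
    obtain ⟨M, hM⟩ := Finset.exists_maximal hne
    exact ⟨M, hM.1, fun x hx hlt => lt_irrefl _ (lt_of_lt_of_le hlt (hM.2 hx hlt.le))⟩
  rw [mem_filter] at hM
  refine ⟨M, mem_children.2 ⟨hM.1, hM.2.2, ?_⟩, hM.2.1⟩
  rintro ⟨C, hC, hMC, hCA⟩
  exact hmax C (mem_filter.2 ⟨hC, hM.2.1.trans hMC.subset, hCA⟩) hMC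

include hF in
lemma children_disjoint {A B B' : Finset (Fin k)} (hB : B ∈ children F A) (hB' : B' ∈ children F A)
    (hne : B ≠ B') : Disjoint B B' := by
  rcases hF.1 B (child_mem hB) B' (child_mem hB') with h | h | h
  · exact absurd ⟨B', child_mem hB', lt_of_le_of_ne h hne, child_ssubset hB'⟩ (mem_children.1 hB).2.2
  · exact absurd ⟨B, child_mem hB, lt_of_le_of_ne h (Ne.symm hne), child_ssubset hB⟩ (mem_children.1 hB').2.2
  · exact h

include hF in
lemma exists_child_mem {A : Finset (Fin k)} (hA : A ∈ F) (h2 : 1 < A.card) {i : Fin k}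
    (hi : i ∈ A) : ∃ B ∈ children F A, i ∈ B := by
  have hsi : ({i} : Finset (Fin k)) ⊂ A := by
    refine ⟨Finset.singleton_subset_iff.2 hi, fun hAi => ?_⟩
    have := Finset.card_le_card hAi
    simp at this; omega
  obtain ⟨C, hC, hsub⟩ := exists_child_superset hF (hF.2.2.1 i) hsi
  exact ⟨C, hC, hsub (mem_singleton_self i)⟩

include hF in
lemma biUnion_children {A : Finset (Fin k)} (hA : A ∈ F) (h2 : 1 < A.card) :
    (children F A).biUnion id = A := by
  apply Finset.Subset.antisymm
  · intro x hx
    rw [mem_biUnion] at hx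
    obtain ⟨B, hB, hx⟩ := hx
    exact (child_ssubset hB).subset hx
  · intro i hi
    obtain ⟨B, hB, hiB⟩ := exists_child_mem hF hA h2 hi
    exact mem_biUnion.2 ⟨B, hB, hiB⟩

include hF in
lemma two_le_childCount {A : Finset (Fin k)} (hA : A ∈ F) (h2 : 1 < A.card) :
    2 ≤ childCount F A := by
  rw [childCount_eq]
  by_contra hlt
  push_neg at hlt
  interval_cases hc : (children F A).card
  · have : A = ∅ := by
      rw [← biUnion_children hF hA h2, Finset.card_eq_zero.1 hc]; simp
    subst this; simp at h2
  · obtain ⟨B, hB⟩ := Finset.card_eq_one.1 hc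
    have hAB : A = B := by
      rw [← biUnion_children hF hA h2, hB, Finset.singleton_biUnion]; rfl
    have hBc : B ∈ children F A := by rw [hB]; exact mem_singleton_self B
    exact absurd hAB.symm (child_ssubset hBc).ne

include hF in
/-- a tree family is its internal sets together with all singletons -/
lemma treeFam_eq_internals_union :
    F = Internals F ∪ Finset.univ.image (fun i : Fin k => ({i} : Finset (Fin k))) := by
  ext B
  simp only [mem_union, mem_Internals, mem_image, mem_univ, true_and]
  constructor
  · intro hB
    rcases Nat.lt_or_ge 1 B.card with h | h
    · exact Or.inl ⟨hB, h⟩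
    · interval_cases hc : B.card
      · exact absurd (Finset.card_eq_zero.1 hc ▸ hB) hF.2.2.2
      · obtain ⟨i, hi⟩ := Finset.card_eq_one.1 hc
        exact Or.inr ⟨i, hi.symm⟩
  · rintro (⟨hB, _⟩ | ⟨i, rfl⟩)
    · exact hB
    · exact hF.2.2.1 i

include hF in
lemma univ_mem_Internals (hk : 2 ≤ k) : (Finset.univ : Finset (Fin k)) ∈ Internals F :=
  mem_Internals.2 ⟨hF.2.1, by rw [Finset.card_univ, Fintype.card_fin]; omega⟩


section Glue
variable {A : Finset (Fin k)}

noncomputable def blk (F : Finset (Finset (Fin k))) (A : Finset (Fin k)) :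
    Fin (childCount F A) → Finset (Fin k) :=
  fun i => ((children F A).equivFin.symm i : {x // x ∈ children F A}).1

lemma blk_mem (F : Finset (Finset (Fin k))) (A : Finset (Fin k)) (i : Fin (childCount F A)) :
    blk F A i ∈ children F A :=
  ((children F A).equivFin.symm i).2

lemma blk_injective (F : Finset (Finset (Fin k))) (A : Finset (Fin k)) :
    Function.Injective (blk F A) := fun i j h =>
  (Equiv.injective _) (Subtype.ext h)

lemma blk_surj (F : Finset (Finset (Fin k))) (A : Finset (Fin k)) {B : Finset (Fin k)}
    (hB : B ∈ children F A) : ∃ i, blk F A i = B := by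
  refine ⟨(children F A).equivFin ⟨B, hB⟩, ?_⟩
  simp [blk]

noncomputable def glue1 (F : Finset (Finset (Fin k))) (A : Finset (Fin k)) :
    Finset (Fin (childCount F A)) → Finset (Fin k) :=
  fun B => B.biUnion (blk F A)

lemma mem_glue1 {B : Finset (Fin (childCount F A))} {x : Fin k} :
    x ∈ glue1 F A B ↔ ∃ i ∈ B, x ∈ blk F A i := by simp [glue1]

include hF in
lemma blk_nonempty (i : Fin (childCount F A)) : (blk F A i).Nonempty :=
  child_nonempty hF (blk_mem F A i)

include hF in
lemma blk_disjoint {i j : Fin (childCount F A)} (hne : i ≠ j) :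
    Disjoint (blk F A i) (blk F A j) :=
  children_disjoint hF (blk_mem F A i) (blk_mem F A j) (fun h => hne (blk_injective F A h))

lemma glue1_subset {B : Finset (Fin (childCount F A))} : glue1 F A B ⊆ A := by
  intro x hx
  obtain ⟨i, _, hx⟩ := mem_glue1.1 hx
  exact (child_ssubset (blk_mem F A i)).subset hx

lemma glue1_mono {B B' : Finset (Fin (childCount F A))} (h : B ⊆ B') :
    glue1 F A B ⊆ glue1 F A B' := by
  intro x hx
  obtain ⟨i, hi, hx⟩ := mem_glue1.1 hx
  exact mem_glue1.2 ⟨i, h hi, hx⟩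

include hF in
lemma blk_subset_glue1_iff {B : Finset (Fin (childCount F A))} {i : Fin (childCount F A)} :
    blk F A i ⊆ glue1 F A B ↔ i ∈ B := by
  constructor
  · intro h
    obtain ⟨x, hx⟩ := blk_nonempty hF i
    obtain ⟨j, hj, hxj⟩ := mem_glue1.1 (h hx)
    by_contra hiB
    have hij : i ≠ j := fun he => hiB (he ▸ hj)
    exact (Finset.disjoint_left.1 (blk_disjoint hF hij)) hx hxj
  · intro h
    intro x hx
    exact mem_glue1.2 ⟨i, h, hx⟩

include hF in
lemma glue1_subset_iff {B B' : Finset (Fin (childCount F A))} :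
    glue1 F A B ⊆ glue1 F A B' ↔ B ⊆ B' := by
  constructor
  · intro h i hi
    exact (blk_subset_glue1_iff hF).1 (((blk_subset_glue1_iff hF).2 hi).trans h)
  · exact glue1_mono

include hF in
lemma glue1_inj {B B' : Finset (Fin (childCount F A))} (h : glue1 F A B = glue1 F A B') :
    B = B' :=
  Finset.Subset.antisymm ((glue1_subset_iff hF).1 h.le) ((glue1_subset_iff hF).1 h.ge)

include hF in
lemma glue1_ssubset_iff {B B' : Finset (Fin (childCount F A))} :
    glue1 F A B ⊂ glue1 F A B' ↔ B ⊂ B' := by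
  rw [Finset.ssubset_iff_subset_ne, Finset.ssubset_iff_subset_ne, glue1_subset_iff hF]
  constructor
  · rintro ⟨h1, h2⟩; exact ⟨h1, fun he => h2 (he ▸ rfl)⟩
  · rintro ⟨h1, h2⟩; exact ⟨h1, fun he => h2 (glue1_inj hF he)⟩

include hF in
lemma glue1_nonempty {B : Finset (Fin (childCount F A))} (h : B.Nonempty) :
    (glue1 F A B).Nonempty := by
  obtain ⟨i, hi⟩ := h
  obtain ⟨x, hx⟩ := blk_nonempty hF i
  exact ⟨x, mem_glue1.2 ⟨i, hi, hx⟩⟩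

include hF in
lemma glue1_eq_empty_iff {B : Finset (Fin (childCount F A))} :
    glue1 F A B = ∅ ↔ B = ∅ := by
  constructor
  · intro h
    by_contra hne
    obtain ⟨x, hx⟩ := glue1_nonempty hF (Finset.nonempty_iff_ne_empty.2 hne)
    simp [h] at hx
  · rintro rfl; simp [glue1]

include hF in
lemma glue1_univ (hA : A ∈ Internals F) : glue1 F A Finset.univ = A := by
  rw [mem_Internals] at hA
  have hA' := biUnion_children hF hA.1 hA.2
  ext x
  rw [mem_glue1]
  constructor
  · rintro ⟨i, _, hx⟩; exact (child_ssubset (blk_mem F A i)).subset hx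
  · intro hx
    have hx' : x ∈ (children F A).biUnion id := by rw [hA']; exact hx
    obtain ⟨B, hB, hxB⟩ := mem_biUnion.1 hx'
    obtain ⟨i, rfl⟩ := blk_surj F A hB
    exact ⟨i, mem_univ i, hxB⟩

lemma glue1_singleton (i : Fin (childCount F A)) : glue1 F A {i} = blk F A i := by
  simp [glue1]

include hF in
lemma glue1_disjoint_iff {B B' : Finset (Fin (childCount F A))} :
    Disjoint (glue1 F A B) (glue1 F A B') ↔ Disjoint B B' := by
  constructor
  · intro h
    rw [Finset.disjoint_left]
    intro i hi hi'
    obtain ⟨x, hx⟩ := blk_nonempty hF i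
    exact (Finset.disjoint_left.1 h) (mem_glue1.2 ⟨i, hi, hx⟩) (mem_glue1.2 ⟨i, hi', hx⟩)
  · intro h
    rw [Finset.disjoint_left]
    intro x hx hx'
    obtain ⟨i, hi, hxi⟩ := mem_glue1.1 hx
    obtain ⟨j, hj, hxj⟩ := mem_glue1.1 hx'
    rcases eq_or_ne i j with rfl | hij
    · exact (Finset.disjoint_left.1 h) hi hj
    · exact (Finset.disjoint_left.1 (blk_disjoint hF hij)) hxi hxj

include hF in
lemma one_lt_card_glue1 {B : Finset (Fin (childCount F A))} (h : 1 < B.card) :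
    1 < (glue1 F A B).card := by
  obtain ⟨i, hi, j, hj, hij⟩ := Finset.one_lt_card.1 h
  obtain ⟨x, hx⟩ := blk_nonempty hF i
  obtain ⟨y, hy⟩ := blk_nonempty hF j
  refine Finset.one_lt_card.2 ⟨x, mem_glue1.2 ⟨i, hi, hx⟩, y, mem_glue1.2 ⟨j, hj, hy⟩, ?_⟩
  rintro rfl
  exact (Finset.disjoint_left.1 (blk_disjoint hF hij)) hx hy

noncomputable def unglue1 (F : Finset (Finset (Fin k))) (A : Finset (Fin k))
    (C : Finset (Fin k)) : Finset (Fin (childCount F A)) :=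
  Finset.univ.filter (fun i => blk F A i ⊆ C)

include hF in
lemma unglue1_glue1 {B : Finset (Fin (childCount F A))} :
    unglue1 F A (glue1 F A B) = B := by
  ext i
  simp only [unglue1, mem_filter, mem_univ, true_and]
  exact blk_subset_glue1_iff hF

/-- `C` is a nonempty union of children of `A`. -/
def Composed (F : Finset (Finset (Fin k))) (A C : Finset (Fin k)) : Prop :=
  C.Nonempty ∧ C ⊆ A ∧ ∀ B ∈ children F A, ¬ Disjoint B C → B ⊆ C

include hF in
lemma glue1_unglue1 (hA : A ∈ Internals F) {C : Finset (Fin k)} (hC : Composed F A C) :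
    glue1 F A (unglue1 F A C) = C := by
  rw [mem_Internals] at hA
  ext x
  simp only [mem_glue1, unglue1, mem_filter, mem_univ, true_and]
  constructor
  · rintro ⟨i, hi, hx⟩; exact hi hx
  · intro hx
    obtain ⟨B, hB, hxB⟩ := exists_child_mem hF hA.1 hA.2 (hC.2.1 hx)
    obtain ⟨i, rfl⟩ := blk_surj F A hB
    refine ⟨i, hC.2.2 _ (blk_mem F A i) ?_, hxB⟩
    exact Finset.not_disjoint_iff.2 ⟨x, hxB, hx⟩

include hF in
lemma composed_glue1 {B : Finset (Fin (childCount F A))} (h : B.Nonempty) :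
    Composed F A (glue1 F A B) := by
  refine ⟨glue1_nonempty hF h, glue1_subset, ?_⟩
  intro D hD hdisj
  obtain ⟨i, rfl⟩ := blk_surj F A hD
  rw [blk_subset_glue1_iff hF]
  by_contra hiB
  apply hdisj
  rw [Finset.disjoint_left]
  intro x hx hx'
  obtain ⟨j, hj, hxj⟩ := mem_glue1.1 hx'
  rcases eq_or_ne i j with rfl | hij
  · exact hiB hj
  · exact (Finset.disjoint_left.1 (blk_disjoint hF hij)) hx hxj

end Glue

section GlueAll

noncomputable def glueAll (F : Finset (Finset (Fin k)))
    (p : ∀ A ∈ Internals F, Finset (Finset (Fin (childCount F A)))) :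
    Finset (Finset (Fin k)) :=
  (Internals F).attach.biUnion fun A => (p A.1 A.2).image (glue1 F A.1)

variable {p : ∀ A ∈ Internals F, Finset (Finset (Fin (childCount F A)))}

lemma mem_glueAll {C : Finset (Fin k)} :
    C ∈ glueAll F p ↔
      ∃ (A : Finset (Fin k)) (hA : A ∈ Internals F), ∃ B ∈ p A hA, glue1 F A B = C := by
  simp only [glueAll, mem_biUnion, mem_attach, true_and, mem_image]
  constructor
  · rintro ⟨⟨A, hA⟩, B, hB, rfl⟩; exact ⟨A, hA, B, hB, rfl⟩
  · rintro ⟨A, hA, B, hB, rfl⟩; exact ⟨⟨A, hA⟩, B, hB, rfl⟩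

variable (hp : ∀ A (hA : A ∈ Internals F), IsTreeFam (p A hA))

include hF hp in
lemma glueAll_nonempty_mem {C : Finset (Fin k)} (hC : C ∈ glueAll F p) : C.Nonempty := by
  obtain ⟨A, hA, B, hB, rfl⟩ := mem_glueAll.1 hC
  refine glue1_nonempty hF (Finset.nonempty_iff_ne_empty.2 ?_)
  rintro rfl
  exact (hp A hA).2.2.2 hB

include hF hp in
/-- Central location lemma: an element of the glued family which sits inside `A` and is not
strictly inside a block of `A` is a glued image at `A`. -/
lemma locate {A : Finset (Fin k)} (hA : A ∈ Internals F) {C : Finset (Fin k)}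
    (hC : C ∈ glueAll F p) (hCA : C ⊆ A) (hne : C.Nonempty)
    (hblk : ∀ i : Fin (childCount F A), ¬ C ⊂ blk F A i) :
    ∃ B ∈ p A hA, glue1 F A B = C := by
  obtain ⟨A', hA', B', hB', rfl⟩ := mem_glueAll.1 hC
  have hB'ne : B'.Nonempty := by
    rcases Finset.eq_empty_or_nonempty B' with rfl | h
    · exact absurd hB' ((hp A' hA').2.2.2)
    · exact h
  rcases eq_or_ne A A' with rfl | hAA'
  · exact ⟨B', hB', rfl⟩
  rcases hF.1 A (mem_Internals.1 hA).1 A' (mem_Internals.1 hA').1 with h | h | h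
  · -- A ⊂ A' : forced C = A
    have hss : A ⊂ A' := lt_of_le_of_ne h hAA'
    obtain ⟨E, hE, hAE⟩ := exists_child_superset hF (mem_Internals.1 hA).1 hss
    have hCE : ∀ i ∈ B', blk F A' i = E := by
      intro i hi
      by_contra hne'
      have hdisj := children_disjoint hF (blk_mem F A' i) hE hne'
      have hsub : blk F A' i ⊆ E := by
        intro x hx
        exact hAE (hCA (mem_glue1.2 ⟨i, hi, hx⟩))
      obtain ⟨x, hx⟩ := blk_nonempty hF i
      exact (Finset.disjoint_left.1 hdisj) hx (hsub hx)
    have hCeq : glue1 F A' B' = E := by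
      apply Finset.Subset.antisymm
      · intro x hx
        obtain ⟨i, hi, hxi⟩ := mem_glue1.1 hx
        exact (hCE i hi) ▸ hxi
      · obtain ⟨i, hi⟩ := hB'ne
        rw [← hCE i hi]
        intro x hx
        exact mem_glue1.2 ⟨i, hi, hx⟩
    have hCA' : glue1 F A' B' = A := Finset.Subset.antisymm hCA (hCeq ▸ hAE)
    refine ⟨Finset.univ, (hp A hA).2.1, ?_⟩
    rw [glue1_univ hF hA, hCA']
  · -- A' ⊂ A
    have hss : A' ⊂ A := lt_of_le_of_ne h (Ne.symm hAA')
    obtain ⟨E, hE, hAE⟩ := exists_child_superset hF (mem_Internals.1 hA').1 hss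
    obtain ⟨i₀, hi₀⟩ := blk_surj F A hE
    have hCE : glue1 F A' B' ⊆ blk F A i₀ := by
      rw [hi₀]; exact glue1_subset.trans hAE
    have : glue1 F A' B' = blk F A i₀ := by
      rcases lt_or_eq_of_le (Finset.le_iff_subset.mpr hCE) with h' | h'
      · exact absurd h' (hblk i₀)
      · exact h'
    refine ⟨{i₀}, (hp A hA).2.2.1 i₀, ?_⟩
    rw [glue1_singleton, this]
  · -- disjoint: impossible
    obtain ⟨x, hx⟩ := hne
    exact absurd (Finset.disjoint_left.1 h (hCA hx) (glue1_subset hx)) (fun hf => hf)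

include hF hp in
lemma glueAll_rel {A A' : Finset (Fin k)} (hA : A ∈ Internals F) (hA' : A' ∈ Internals F)
    (hss : A ⊂ A') {B : Finset (Fin (childCount F A))}
    {B' : Finset (Fin (childCount F A'))} (hB' : B' ∈ p A' hA') :
    glue1 F A B ⊆ glue1 F A' B' ∨ Disjoint (glue1 F A B) (glue1 F A' B') := by
  obtain ⟨E, hE, hAE⟩ := exists_child_superset hF (mem_Internals.1 hA).1 hss
  obtain ⟨i₀, hi₀⟩ := blk_surj F A' hE
  by_cases hi : i₀ ∈ B'
  · left
    intro x hx
    exact mem_glue1.2 ⟨i₀, hi, by rw [hi₀]; exact hAE (glue1_subset hx)⟩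
  · right
    rw [Finset.disjoint_left]
    intro x hx hx'
    obtain ⟨j, hj, hxj⟩ := mem_glue1.1 hx'
    have hxE : x ∈ blk F A' i₀ := by rw [hi₀]; exact hAE (glue1_subset hx)
    have hij : i₀ ≠ j := fun he => hi (he ▸ hj)
    exact Finset.disjoint_left.1 (blk_disjoint hF hij) hxE hxj

include hF hp in
lemma isTreeFam_glueAll (hk : 2 ≤ k) : IsTreeFam (glueAll F p) := by
  refine ⟨?_, ?_, ?_, ?_⟩
  · intro C hC C' hC'
    obtain ⟨A, hA, B, hB, rfl⟩ := mem_glueAll.1 hC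
    obtain ⟨A', hA', B', hB', rfl⟩ := mem_glueAll.1 hC'
    rcases eq_or_ne A A' with rfl | hne
    · rcases (hp A hA).1 B hB B' (by exact hB') with h | h | h
      · exact Or.inl (glue1_mono h)
      · exact Or.inr (Or.inl (glue1_mono h))
      · exact Or.inr (Or.inr ((glue1_disjoint_iff hF).2 h))
    · rcases hF.1 A (mem_Internals.1 hA).1 A' (mem_Internals.1 hA').1 with h | h | h
      · rcases glueAll_rel hF hp hA hA' (lt_of_le_of_ne h hne) hB' with h' | h'
        · exact Or.inl h'
        · exact Or.inr (Or.inr h')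
      · rcases glueAll_rel hF hp hA' hA (lt_of_le_of_ne h (Ne.symm hne)) hB with h' | h'
        · exact Or.inr (Or.inl h')
        · exact Or.inr (Or.inr h'.symm)
      · exact Or.inr (Or.inr (h.mono glue1_subset glue1_subset))
  · exact mem_glueAll.2 ⟨Finset.univ, univ_mem_Internals hF hk, Finset.univ,
      (hp _ _).2.1, glue1_univ hF (univ_mem_Internals hF hk)⟩
  · intro i
    have hne : ((Internals F).filter (fun A => i ∈ A)).Nonempty :=
      ⟨Finset.univ, by simp [univ_mem_Internals hF hk]⟩
    obtain ⟨M, hM, hmin⟩ : ∃ M ∈ ((Internals F).filter (fun A => i ∈ A)), ∀ x ∈ ((Internals F).filter (fun A => i ∈ A)), ¬ x < M := by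
      obtain ⟨M, hM⟩ := Finset.exists_minimal hne
      exact ⟨M, hM.1, fun x hx hlt => lt_irrefl _ (lt_of_lt_of_le hlt (hM.2 hx hlt.le))⟩
    rw [mem_filter] at hM
    obtain ⟨B, hB, hiB⟩ :=
      exists_child_mem hF (mem_Internals.1 hM.1).1 (mem_Internals.1 hM.1).2 hM.2
    have hB1 : B = {i} := by
      have hB1' : B.card = 1 := by
        by_contra h1
        have hBcard : 1 < B.card := by
          have := (child_nonempty hF hB).card_pos
          omega
        exact hmin B (mem_filter.2 ⟨mem_Internals.2 ⟨child_mem hB, hBcard⟩, hiB⟩)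
          (child_ssubset hB)
      obtain ⟨j, hj⟩ := Finset.card_eq_one.1 hB1'
      subst hj
      rw [Finset.mem_singleton] at hiB
      subst hiB
      rfl
    obtain ⟨i₀, hi₀⟩ := blk_surj F M hB
    exact mem_glueAll.2 ⟨M, hM.1, {i₀}, (hp _ _).2.2.1 i₀, by rw [glue1_singleton, hi₀, hB1]⟩
  · intro h
    obtain ⟨A, hA, B, hB, hg⟩ := mem_glueAll.1 h
    have hBe : B = ∅ := (glue1_eq_empty_iff hF).1 hg
    exact (hp A hA).2.2.2 (hBe ▸ hB)

include hF hp in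
lemma children_glueAll {A : Finset (Fin k)} (hA : A ∈ Internals F)
    {B : Finset (Fin (childCount F A))} (hB : B ∈ p A hA) (hBc : 1 < B.card) :
    children (glueAll F p) (glue1 F A B) = (children (p A hA) B).image (glue1 F A) := by
  have hptf := hp A hA
  ext D
  simp only [Finset.mem_image]
  constructor
  · intro hD
    have hDG := child_mem hD
    have hDss := child_ssubset hD
    have hDne : D.Nonempty := glueAll_nonempty_mem hF hp hDG
    -- rule out D strictly inside a block
    have hcase : ∀ i : Fin (childCount F A), ¬ D ⊂ blk F A i := by
      intro i hDi
      obtain ⟨x, hx⟩ := hDne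
      have hxB : x ∈ glue1 F A B := hDss.subset hx
      obtain ⟨j, hj, hxj⟩ := mem_glue1.1 hxB
      have hij : i = j := by
        by_contra hij
        exact Finset.disjoint_left.1 (blk_disjoint hF hij) (hDi.subset hx) hxj
      subst hij
      have hiB : i ∈ B := hj
      have hblkG : blk F A i ∈ glueAll F p := by
        refine mem_glueAll.2 ⟨A, hA, {i}, hptf.2.2.1 i, glue1_singleton i⟩
      have hblkss : blk F A i ⊂ glue1 F A B := by
        rw [← glue1_singleton (F := F) (A := A) i]
        refine (glue1_ssubset_iff hF).2 ?_
        refine Finset.ssubset_iff_subset_ne.2 ⟨Finset.singleton_subset_iff.2 hiB, ?_⟩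
        intro he
        rw [← he] at hBc
        simp at hBc
      exact (mem_children.1 hD).2.2 ⟨blk F A i, hblkG, hDi, hblkss⟩
    obtain ⟨C, hC, hCD⟩ := locate hF hp hA hDG (hDss.subset.trans glue1_subset) hDne hcase
    subst hCD
    refine ⟨C, ?_, rfl⟩
    rw [mem_children]
    refine ⟨hC, (glue1_ssubset_iff hF).1 hDss, ?_⟩
    rintro ⟨C', hC', hCC', hC'B⟩
    exact (mem_children.1 hD).2.2 ⟨glue1 F A C', mem_glueAll.2 ⟨A, hA, C', hC', rfl⟩,
      (glue1_ssubset_iff hF).2 hCC', (glue1_ssubset_iff hF).2 hC'B⟩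
  · rintro ⟨C, hC, rfl⟩
    have hCmem := child_mem hC
    have hCne : C.Nonempty := child_nonempty hptf hC
    rw [mem_children]
    refine ⟨mem_glueAll.2 ⟨A, hA, C, hCmem, rfl⟩, (glue1_ssubset_iff hF).2 (child_ssubset hC), ?_⟩
    rintro ⟨D, hD, hCD, hDB⟩
    have hDne : D.Nonempty := (glue1_nonempty hF hCne).mono hCD.subset
    have hcase : ∀ i : Fin (childCount F A), ¬ D ⊂ blk F A i := by
      intro i hDi
      obtain ⟨j, hj⟩ := hCne
      have hj' : blk F A j ⊆ D := by
        intro x hx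
        exact hCD.subset (mem_glue1.2 ⟨j, hj, hx⟩)
      have hij : i = j := by
        by_contra hij
        obtain ⟨x, hx⟩ := blk_nonempty hF j
        exact Finset.disjoint_left.1 (blk_disjoint hF hij) (hDi.subset (hj' hx)) hx
      subst hij
      exact absurd (lt_of_le_of_lt (Finset.le_iff_subset.mpr hj') hDi) (lt_irrefl _)
    obtain ⟨C', hC', hC'D⟩ := locate hF hp hA hD (hDB.subset.trans glue1_subset)
      hDne hcase
    subst hC'D
    exact (mem_children.1 hC).2.2 ⟨C', hC', (glue1_ssubset_iff hF).1 hCD,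
      (glue1_ssubset_iff hF).1 hDB⟩

include hF hp in
lemma childCount_glueAll {A : Finset (Fin k)} (hA : A ∈ Internals F)
    {B : Finset (Fin (childCount F A))} (hB : B ∈ p A hA) (hBc : 1 < B.card) :
    childCount (glueAll F p) (glue1 F A B) = childCount (p A hA) B := by
  rw [childCount_eq, childCount_eq, children_glueAll hF hp hA hB hBc,
    Finset.card_image_of_injective _ (fun x y hxy => glue1_inj hF hxy)]

include hF hp in
lemma Internals_glueAll :
    Internals (glueAll F p) =
      (Internals F).attach.biUnion
        (fun A => (Internals (p A.1 A.2)).image (glue1 F A.1)) := by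
  ext C
  rw [mem_Internals]
  simp only [mem_biUnion, mem_attach, true_and, Finset.mem_image]
  constructor
  · rintro ⟨hC, hCc⟩
    obtain ⟨A, hA, B, hB, rfl⟩ := mem_glueAll.1 hC
    rcases Nat.lt_or_ge 1 B.card with h1 | h1
    · exact ⟨⟨A, hA⟩, B, mem_Internals.2 ⟨hB, h1⟩, rfl⟩
    · have hBne : B.Nonempty := by
        rcases Finset.eq_empty_or_nonempty B with rfl | h
        · exact absurd hB (hp A hA).2.2.2
        · exact h
      have hB1 : B.card = 1 := by
        have := hBne.card_pos
        omega
      obtain ⟨i, rfl⟩ := Finset.card_eq_one.1 hB1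
      rw [glue1_singleton] at hCc ⊢
      have hCF : blk F A i ∈ Internals F := mem_Internals.2 ⟨child_mem (blk_mem F A i), hCc⟩
      refine ⟨⟨blk F A i, hCF⟩, Finset.univ, mem_Internals.2 ⟨(hp _ hCF).2.1, ?_⟩,
        glue1_univ hF hCF⟩
      have h2 := two_le_childCount hF (child_mem (blk_mem F A i)) hCc
      rw [Finset.card_univ, Fintype.card_fin]; exact h2
  · rintro ⟨⟨A, hA⟩, B, hB, rfl⟩
    rw [mem_Internals] at hB
    exact ⟨mem_glueAll.2 ⟨A, hA, B, hB.1, rfl⟩, one_lt_card_glue1 hF hB.2⟩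


include hF hp in
lemma glueAll_piece_ne {A A' : Finset (Fin k)} (hA : A ∈ Internals F) (hA' : A' ∈ Internals F)
    (hne : A ≠ A') {B : Finset (Fin (childCount F A))} {B' : Finset (Fin (childCount F A'))}
    (hBc : 1 < B.card) (hB'c : 1 < B'.card) :
    glue1 F A B ≠ glue1 F A' B' := by
  intro heq
  have key : ∀ (X Y : Finset (Fin k)) (hX : X ∈ Internals F) (hY : Y ∈ Internals F),
      X ⊂ Y → ∀ (C : Finset (Fin (childCount F X))) (C' : Finset (Fin (childCount F Y))),
      1 < C'.card → glue1 F X C = glue1 F Y C' → False := by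
    intro X Y hX hY hss C C' hC'c heq'
    obtain ⟨E, hE, hXE⟩ := exists_child_superset hF (mem_Internals.1 hX).1 hss
    obtain ⟨i₀, hi₀⟩ := blk_surj F Y hE
    obtain ⟨i, hi, j, hj, hij⟩ := Finset.one_lt_card.1 hC'c
    have hblk : ∀ m ∈ C', blk F Y m = E := by
      intro m hm
      have hsub : blk F Y m ⊆ E := by
        intro x hx
        have : x ∈ glue1 F Y C' := mem_glue1.2 ⟨m, hm, hx⟩
        rw [← heq'] at this
        exact hXE (glue1_subset this)
      by_contra hne'
      obtain ⟨x, hx⟩ := blk_nonempty hF m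
      exact Finset.disjoint_left.1 (children_disjoint hF (blk_mem F Y m) hE hne') hx (hsub hx)
    have : blk F Y i = blk F Y j := (hblk i hi).trans (hblk j hj).symm
    exact hij (blk_injective F Y this)
  rcases hF.1 A (mem_Internals.1 hA).1 A' (mem_Internals.1 hA').1 with h | h | h
  · exact key A A' hA hA' (lt_of_le_of_ne h hne) B B' hB'c heq
  · exact key A' A hA' hA (lt_of_le_of_ne h (Ne.symm hne)) B' B hBc heq.symm
  · have hBne : B.Nonempty := Finset.one_lt_card.1 hBc |>.imp (fun i hi => hi.1)
    obtain ⟨x, hx⟩ := glue1_nonempty hF hBne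
    have hx' : x ∈ glue1 F A' B' := heq ▸ hx
    exact Finset.disjoint_left.1 h (glue1_subset hx) (glue1_subset hx')

lemma treeEnergy_def {K : Type*} [CommRing K] (h : ℕ → K) (G : Finset (Finset (Fin k))) :
    treeEnergy h G = ∏ A ∈ Internals G, h (childCount G A) := rfl

include hF hp in
lemma treeEnergy_glueAll {K : Type*} [CommRing K] (h : ℕ → K) :
    treeEnergy h (glueAll F p) = ∏ A ∈ (Internals F).attach, treeEnergy h (p A.1 A.2) := by
  rw [treeEnergy_def, Internals_glueAll hF hp, Finset.prod_biUnion]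
  · apply Finset.prod_congr rfl
    intro A _
    rw [Finset.prod_image (fun x _ y _ hxy => glue1_inj hF hxy), treeEnergy_def]
    apply Finset.prod_congr rfl
    intro B hB
    rw [mem_Internals] at hB
    rw [childCount_glueAll hF hp A.2 hB.1 hB.2]
  · intro a _ b _ hab
    simp only [Function.onFun]
    rw [Finset.disjoint_left]
    intro C hCa hCb
    obtain ⟨B, hB, rfl⟩ := Finset.mem_image.1 hCa
    obtain ⟨B', hB', heq⟩ := Finset.mem_image.1 hCb
    rw [mem_Internals] at hB hB'
    have hne : a.1 ≠ b.1 := fun he => hab (Subtype.ext he)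
    exact glueAll_piece_ne hF hp a.2 b.2 hne hB.2 hB'.2 heq.symm

include hF hp in
lemma Internals_subset_glueAll : Internals F ⊆ Internals (glueAll F p) := by
  intro A hA
  have hA' := mem_Internals.1 hA
  exact mem_Internals.2
    ⟨mem_glueAll.2 ⟨A, hA, Finset.univ, (hp A hA).2.1, glue1_univ hF hA⟩, hA'.2⟩

include hF hp in
lemma glueImage_eq_composed {A : Finset (Fin k)} (hA : A ∈ Internals F) :
    (p A hA).image (glue1 F A) = (glueAll F p).filter (fun C => Composed F A C) := by
  ext C
  rw [Finset.mem_image, mem_filter]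
  constructor
  · rintro ⟨B, hB, rfl⟩
    have hBne : B.Nonempty := by
      rcases Finset.eq_empty_or_nonempty B with rfl | h
      · exact absurd hB (hp A hA).2.2.2
      · exact h
    exact ⟨mem_glueAll.2 ⟨A, hA, B, hB, rfl⟩, composed_glue1 hF hBne⟩
  · rintro ⟨hCG, hcomp⟩
    have hblk : ∀ i : Fin (childCount F A), ¬ C ⊂ blk F A i := by
      intro i hCi
      have hnd : ¬ Disjoint (blk F A i) C := by
        rw [Finset.not_disjoint_iff]
        obtain ⟨x, hx⟩ := hcomp.1
        exact ⟨x, hCi.subset hx, hx⟩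
      exact absurd (Finset.ssubset_iff_subset_ne.1 hCi).2
        (by simpa using (Finset.Subset.antisymm (hcomp.2.2 _ (blk_mem F A i) hnd)
          hCi.subset).symm)
    obtain ⟨B, hB, hBC⟩ := locate hF hp hA hCG hcomp.2.1 hcomp.1 hblk
    exact ⟨B, hB, hBC⟩

end GlueAll

section Pull

omit hF

variable {G S : Finset (Finset (Fin k))}

def Fof (S : Finset (Finset (Fin k))) : Finset (Finset (Fin k)) :=
  S ∪ Finset.univ.image (fun i : Fin k => ({i} : Finset (Fin k)))

lemma mem_Fof {B : Finset (Fin k)} : B ∈ Fof S ↔ B ∈ S ∨ ∃ i, B = {i} := by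
  simp [Fof, eq_comm]

variable (hG : IsTreeFam G) (hS : S ⊆ Internals G) (hU : Finset.univ ∈ S)

include hG hS in
lemma Fof_subset : Fof S ⊆ G := by
  intro B hB
  rcases mem_Fof.1 hB with h | ⟨i, rfl⟩
  · exact (mem_Internals.1 (hS h)).1
  · exact hG.2.2.1 i

include hG hS hU in
lemma isTreeFam_Fof : IsTreeFam (Fof S) := by
  refine ⟨?_, ?_, ?_, ?_⟩
  · intro A hA B hB
    exact hG.1 A (Fof_subset hG hS hA) B (Fof_subset hG hS hB)
  · exact mem_Fof.2 (Or.inl hU)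
  · intro i
    exact mem_Fof.2 (Or.inr ⟨i, rfl⟩)
  · intro h
    rcases mem_Fof.1 h with h' | ⟨i, hi⟩
    · have := (mem_Internals.1 (hS h')).2
      simp at this
    · exact absurd hi.symm (Finset.singleton_ne_empty i)

include hS in
lemma Internals_Fof : Internals (Fof S) = S := by
  ext B
  rw [mem_Internals, mem_Fof]
  constructor
  · rintro ⟨h | ⟨i, rfl⟩, hc⟩
    · exact h
    · simp at hc
  · intro h
    exact ⟨Or.inl h, (mem_Internals.1 (hS h)).2⟩

noncomputable def pullSet (G F : Finset (Finset (Fin k))) (A : Finset (Fin k)) :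
    Finset (Finset (Fin (childCount F A))) :=
  (G.filter (fun C => Composed F A C)).image (unglue1 F A)

variable (hFS : IsTreeFam (Fof S))

include hFS in
lemma pull_glue_image {A : Finset (Fin k)} (hA : A ∈ Internals (Fof S)) :
    (pullSet G (Fof S) A).image (glue1 (Fof S) A) = G.filter (fun C => Composed (Fof S) A C) := by
  ext C
  rw [pullSet, Finset.image_image, Finset.mem_image]
  constructor
  · rintro ⟨C', hC', rfl⟩
    rw [mem_filter] at hC'
    simpa [Function.comp, glue1_unglue1 hFS hA hC'.2] using (mem_filter.2 hC')
  · intro hC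
    refine ⟨C, hC, ?_⟩
    simp [Function.comp, glue1_unglue1 hFS hA (mem_filter.1 hC).2]

include hG hS hFS in
lemma isTreeFam_pullSet {A : Finset (Fin k)} (hA : A ∈ Internals (Fof S)) :
    IsTreeFam (pullSet G (Fof S) A) := by
  have hAG : A ∈ Internals G := hS (by rwa [Internals_Fof hS] at hA)
  refine ⟨?_, ?_, ?_, ?_⟩
  · rintro B hB B' hB'
    obtain ⟨C, hC, rfl⟩ := Finset.mem_image.1 hB
    obtain ⟨C', hC', rfl⟩ := Finset.mem_image.1 hB'
    rw [mem_filter] at hC hC'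
    have hmono : ∀ {X Y : Finset (Fin k)}, X ⊆ Y →
        unglue1 (Fof S) A X ⊆ unglue1 (Fof S) A Y := by
      intro X Y hXY i hi
      rw [unglue1, mem_filter] at hi ⊢
      exact ⟨hi.1, hi.2.trans hXY⟩
    rcases hG.1 C hC.1 C' hC'.1 with h | h | h
    · exact Or.inl (hmono h)
    · exact Or.inr (Or.inl (hmono h))
    · refine Or.inr (Or.inr ?_)
      rw [Finset.disjoint_left]
      intro i hi hi'
      rw [unglue1, mem_filter] at hi hi'
      obtain ⟨x, hx⟩ := blk_nonempty hFS (A := A) i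
      exact Finset.disjoint_left.1 h (hi.2 hx) (hi'.2 hx)
  · have hcomp : Composed (Fof S) A A := by
      refine ⟨Finset.card_pos.1 ?_, Finset.Subset.refl A, fun B hB _ => (child_ssubset hB).subset⟩
      have := (mem_Internals.1 hA).2
      omega
    have : unglue1 (Fof S) A A = Finset.univ := by
      ext i
      simp only [unglue1, mem_filter, mem_univ, true_and, iff_true]
      exact (child_ssubset (blk_mem (Fof S) A i)).subset
    rw [← this]
    exact Finset.mem_image.2 ⟨A, mem_filter.2 ⟨(mem_Internals.1 hAG).1, hcomp⟩, rfl⟩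
  · intro i
    have hcomp : Composed (Fof S) A (blk (Fof S) A i) := by
      refine ⟨blk_nonempty hFS i, (child_ssubset (blk_mem (Fof S) A i)).subset, ?_⟩
      intro B hB hnd
      rcases eq_or_ne B (blk (Fof S) A i) with rfl | hne
      · exact Finset.Subset.refl _
      · exact absurd (children_disjoint hFS hB (blk_mem (Fof S) A i) hne) hnd
    have hmem : blk (Fof S) A i ∈ G := Fof_subset hG hS (child_mem (blk_mem (Fof S) A i))
    have : unglue1 (Fof S) A (blk (Fof S) A i) = {i} := by
      rw [← glue1_singleton (F := Fof S) (A := A) i, unglue1_glue1 hFS]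
    rw [← this]
    exact Finset.mem_image.2 ⟨_, mem_filter.2 ⟨hmem, hcomp⟩, rfl⟩
  · intro h
    obtain ⟨C, hC, hCe⟩ := Finset.mem_image.1 h
    rw [mem_filter] at hC
    have : glue1 (Fof S) A (unglue1 (Fof S) A C) = C := glue1_unglue1 hFS hA hC.2
    rw [hCe] at this
    simp [glue1] at this
    exact absurd this.symm (Finset.nonempty_iff_ne_empty.1 hC.2.1)

include hG hS hU hFS in
lemma glueAll_pullSet :
    glueAll (Fof S) (fun A _ => pullSet G (Fof S) A) = G := by
  apply Finset.Subset.antisymm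
  · intro C hC
    obtain ⟨A, hA, B, hB, rfl⟩ := mem_glueAll.1 hC
    obtain ⟨C', hC', rfl⟩ := Finset.mem_image.1 hB
    rw [mem_filter] at hC'
    rw [glue1_unglue1 hFS hA hC'.2]
    exact hC'.1
  · intro C hC
    have hCne : C.Nonempty := by
      rcases Finset.eq_empty_or_nonempty C with rfl | h
      · exact absurd hC hG.2.2.2
      · exact h
    have hsne : (S.filter (fun A => C ⊆ A)).Nonempty :=
      ⟨Finset.univ, mem_filter.2 ⟨hU, Finset.subset_univ C⟩⟩
    obtain ⟨M, hM, hmin⟩ : ∃ M ∈ (S.filter (fun A => C ⊆ A)), ∀ x ∈ (S.filter (fun A => C ⊆ A)), ¬ x < M := by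
      obtain ⟨M, hM⟩ := Finset.exists_minimal hsne
      exact ⟨M, hM.1, fun x hx hlt => lt_irrefl _ (lt_of_lt_of_le hlt (hM.2 hx hlt.le))⟩
    rw [mem_filter] at hM
    have hMI : M ∈ Internals (Fof S) := by rw [Internals_Fof hS]; exact hM.1
    have hcomp : Composed (Fof S) M C := by
      refine ⟨hCne, hM.2, ?_⟩
      intro B hB hnd
      have hBG : B ∈ G := Fof_subset hG hS (child_mem hB)
      rcases hG.1 B hBG C hC with h | h | h
      · exact h
      · rcases mem_Fof.1 (child_mem hB) with h' | ⟨i, rfl⟩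
        · exact absurd (child_ssubset hB) (hmin B (mem_filter.2 ⟨h', h⟩))
        · obtain ⟨x, hx⟩ := hCne
          have hxi : x = i := by
            have := h hx
            simpa using this
          subst hxi
          intro y hy
          simp only [Finset.mem_singleton] at hy
          subst hy
          exact hx
      · exact absurd h hnd
    refine mem_glueAll.2 ⟨M, hMI, unglue1 (Fof S) M C, ?_, glue1_unglue1 hFS hMI hcomp⟩
    exact Finset.mem_image.2 ⟨C, mem_filter.2 ⟨hC, hcomp⟩, rfl⟩

end Pull

section Main

omit hF

variable {K : Type*} [CommRing K]

noncomputable def TS (k : ℕ) : Finset (Finset (Finset (Fin k))) :=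
  (Finset.univ : Finset (Finset (Finset (Fin k)))).filter IsTreeFam

lemma mem_TS {F : Finset (Finset (Fin k))} : F ∈ TS k ↔ IsTreeFam F := by simp [TS]

lemma Phi_def (h : ℕ → K) (k : ℕ) : Phi h k = -∑ F ∈ TS k, treeEnergy h F := rfl

lemma sum_pow_neg_one (x : Finset (Finset (Fin k))) :
    (∑ m ∈ x.powerset, (-1 : K) ^ m.card) = if x = ∅ then 1 else 0 := by
  have h := Finset.sum_powerset_neg_one_pow_card (x := x)
  have h2 : (∑ m ∈ x.powerset, (-1 : K) ^ m.card) =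
      ((∑ m ∈ x.powerset, (-1 : ℤ) ^ m.card : ℤ) : K) := by
    push_cast
    rfl
  rw [h2, h]
  split <;> simp

/-- the powerset-sign sum -/
lemma sum_sign (M : Finset (Finset (Fin k))) (hU : Finset.univ ∈ M) :
    ∑ S ∈ M.powerset.filter (fun S => Finset.univ ∈ S), (-1 : K) ^ S.card =
      if M = {Finset.univ} then -1 else 0 := by
  have hbij : ∑ S ∈ M.powerset.filter (fun S => Finset.univ ∈ S), (-1 : K) ^ S.card =
      ∑ S' ∈ (M.erase Finset.univ).powerset, (-1 : K) ^ (S'.card + 1) := by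
    refine Finset.sum_nbij' (fun S => S.erase Finset.univ) (fun S' => insert Finset.univ S')
      ?_ ?_ ?_ ?_ ?_
    · intro S hS
      rw [Finset.mem_filter, Finset.mem_powerset] at hS
      rw [Finset.mem_powerset]
      exact Finset.erase_subset_erase _ hS.1
    · intro S' hS'
      rw [Finset.mem_powerset] at hS'
      refine Finset.mem_filter.2 ⟨Finset.mem_powerset.2 ?_, Finset.mem_insert_self _ _⟩
      exact Finset.insert_subset hU (hS'.trans (Finset.erase_subset _ _))
    · intro S hS
      rw [Finset.mem_filter] at hS
      exact Finset.insert_erase hS.2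
    · intro S' hS'
      rw [Finset.mem_powerset] at hS'
      exact Finset.erase_insert (fun h => Finset.notMem_erase _ _ (hS' h))
    · intro S hS
      rw [Finset.mem_filter] at hS
      have hc : (S.erase Finset.univ).card + 1 = S.card := by
        rw [Finset.card_erase_of_mem hS.2]
        have := Finset.card_pos.2 ⟨_, hS.2⟩
        omega
      rw [hc]
  rw [hbij]
  have hstep : ∀ S' : Finset (Finset (Fin k)), (-1 : K) ^ (S'.card + 1) = -1 * (-1) ^ S'.card := by
    intro S'; ring
  rw [Finset.sum_congr rfl (fun S' _ => hstep S'), ← Finset.mul_sum, sum_pow_neg_one]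
  by_cases hM : M = {Finset.univ}
  · subst hM
    simp
  · have hne : M.erase Finset.univ ≠ ∅ := by
      intro he
      apply hM
      apply Finset.Subset.antisymm
      · intro B hB
        rcases eq_or_ne B Finset.univ with rfl | hne
        · exact Finset.mem_singleton_self _
        · exact absurd (Finset.mem_erase.2 ⟨hne, hB⟩) (by rw [he]; exact Finset.notMem_empty B)
      · intro B hB
        rw [Finset.mem_singleton] at hB
        subst hB
        exact hU
    simp [hM, hne]

variable (hk : 2 ≤ k)

include hk in
lemma star_treeFam : IsTreeFam (Fof ({Finset.univ} : Finset (Finset (Fin k)))) := by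
  refine ⟨?_, ?_, ?_, ?_⟩
  · intro A hA B hB
    rcases mem_Fof.1 hA with hA' | ⟨i, rfl⟩
    · rw [Finset.mem_singleton] at hA'; subst hA'
      exact Or.inr (Or.inl (Finset.subset_univ B))
    · rcases mem_Fof.1 hB with hB' | ⟨j, rfl⟩
      · rw [Finset.mem_singleton] at hB'; subst hB'
        exact Or.inl (Finset.subset_univ _)
      · rcases eq_or_ne i j with rfl | hij
        · exact Or.inl (Finset.Subset.refl _)
        · exact Or.inr (Or.inr (by rw [Finset.disjoint_singleton_left, Finset.mem_singleton]; exact hij))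
  · exact mem_Fof.2 (Or.inl (Finset.mem_singleton_self _))
  · intro i
    exact mem_Fof.2 (Or.inr ⟨i, rfl⟩)
  · intro h
    rcases mem_Fof.1 h with h' | ⟨i, hi⟩
    · rw [Finset.mem_singleton] at h'
      have : (Finset.univ : Finset (Fin k)).card = 0 := by rw [← h']; simp
      rw [Finset.card_univ] at this
      simp at this
      omega
    · exact absurd hi.symm (Finset.singleton_ne_empty i)

include hk in
lemma star_internals :
    Internals (Fof ({Finset.univ} : Finset (Finset (Fin k)))) = {Finset.univ} := by
  ext B
  rw [mem_Internals, mem_Fof]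
  constructor
  · rintro ⟨h' | ⟨i, rfl⟩, hc⟩
    · exact h'
    · simp at hc
  · intro h
    rw [Finset.mem_singleton] at h
    subst h
    refine ⟨Or.inl (Finset.mem_singleton_self _), ?_⟩
    rw [Finset.card_univ]
    rw [Fintype.card_fin]; omega

include hk in
lemma internals_eq_singleton_univ {G : Finset (Finset (Fin k))} (hG : IsTreeFam G)
    (h : Internals G = {Finset.univ}) : G = Fof ({Finset.univ} : Finset (Finset (Fin k))) := by
  rw [treeFam_eq_internals_union hG, h]
  rfl

include hk in
lemma childCount_star :
    childCount (Fof ({Finset.univ} : Finset (Finset (Fin k)))) Finset.univ = k := by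
  have hcs : children (Fof ({Finset.univ} : Finset (Finset (Fin k)))) Finset.univ =
      Finset.univ.image (fun i : Fin k => ({i} : Finset (Fin k))) := by
    ext B
    rw [mem_children]
    constructor
    · rintro ⟨hB, hss, _⟩
      rcases mem_Fof.1 hB with h' | ⟨i, rfl⟩
      · rw [Finset.mem_singleton] at h'
        exact absurd h' hss.ne
      · exact Finset.mem_image.2 ⟨i, Finset.mem_univ i, rfl⟩
    · intro hB
      obtain ⟨i, _, rfl⟩ := Finset.mem_image.1 hB
      have hss : ({i} : Finset (Fin k)) ⊂ Finset.univ := by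
        refine Finset.ssubset_iff_subset_ne.2 ⟨Finset.subset_univ _, ?_⟩
        intro he
        have := congrArg Finset.card he
        rw [Finset.card_singleton, Finset.card_univ] at this
        simp at this
        omega
      refine ⟨mem_Fof.2 (Or.inr ⟨i, rfl⟩), hss, ?_⟩
      rintro ⟨C, hC, hiC, hCu⟩
      rcases mem_Fof.1 hC with h' | ⟨j, rfl⟩
      · rw [Finset.mem_singleton] at h'
        exact hCu.ne h'
      · have := Finset.card_lt_card hiC
        simp at this
  rw [childCount_eq, hcs,
    Finset.card_image_of_injective _ Finset.singleton_injective, Finset.card_univ]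
  simp

include hk in
lemma energy_star (h : ℕ → K) :
    treeEnergy h (Fof ({Finset.univ} : Finset (Finset (Fin k)))) = h k := by
  rw [treeEnergy_def, star_internals hk, Finset.prod_singleton, childCount_star hk]

include hk in
lemma key_sum (h : ℕ → K) :
    ∑ x ∈ (TS k).sigma (fun F => (Internals F).pi (fun A => TS (childCount F A))),
        ((-1 : K) ^ (Internals x.1).card *
          ∏ A ∈ (Internals x.1).attach, treeEnergy h (x.2 A.1 A.2)) =
      ∑ y ∈ (TS k).sigma
          (fun G => (Internals G).powerset.filter (fun S => Finset.univ ∈ S)),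
        ((-1 : K) ^ y.2.card * treeEnergy h y.1) := by
  refine Finset.sum_bij (fun x _ => ⟨glueAll x.1 x.2, Internals x.1⟩) ?_ ?_ ?_ ?_
  · intro x hx
    rw [Finset.mem_sigma] at hx
    have hFtf : IsTreeFam x.1 := mem_TS.1 hx.1
    have hp : ∀ A (hA : A ∈ Internals x.1), IsTreeFam (x.2 A hA) := fun A hA =>
      mem_TS.1 (Finset.mem_pi.1 hx.2 A hA)
    rw [Finset.mem_sigma]
    exact ⟨mem_TS.2 (isTreeFam_glueAll hFtf hp hk),
      Finset.mem_filter.2 ⟨Finset.mem_powerset.2 (Internals_subset_glueAll hFtf hp),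
        univ_mem_Internals hFtf hk⟩⟩
  · rintro ⟨F, p⟩ hx ⟨F', p'⟩ hx' heq
    rw [Finset.mem_sigma] at hx hx'
    have hFtf : IsTreeFam F := mem_TS.1 hx.1
    have hF'tf : IsTreeFam F' := mem_TS.1 hx'.1
    have hp : ∀ A (hA : A ∈ Internals F), IsTreeFam (p A hA) := fun A hA =>
      mem_TS.1 (Finset.mem_pi.1 hx.2 A hA)
    have hp' : ∀ A (hA : A ∈ Internals F'), IsTreeFam (p' A hA) := fun A hA =>
      mem_TS.1 (Finset.mem_pi.1 hx'.2 A hA)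
    obtain ⟨h1, h2⟩ := Sigma.mk.inj_iff.1 heq
    have h2' : Internals F = Internals F' := eq_of_heq h2
    have hFF' : F = F' := by
      rw [treeFam_eq_internals_union hFtf, treeFam_eq_internals_union hF'tf, h2']
    subst hFF'
    have hpp : p = p' := by
      funext A hA
      have himg : (p A hA).image (glue1 F A) = (p' A hA).image (glue1 F A) := by
        rw [glueImage_eq_composed hFtf hp hA, glueImage_eq_composed hFtf hp' hA, h1]
      exact Finset.image_injective (fun u v huv => glue1_inj hFtf huv) himg
    subst hpp
    rfl
  · rintro ⟨G, S⟩ hy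
    rw [Finset.mem_sigma] at hy
    have hG : IsTreeFam G := mem_TS.1 hy.1
    rw [Finset.mem_filter, Finset.mem_powerset] at hy
    have hS : S ⊆ Internals G := hy.2.1
    have hU : Finset.univ ∈ S := hy.2.2
    have hFS : IsTreeFam (Fof S) := isTreeFam_Fof hG hS hU
    refine ⟨⟨Fof S, fun A _ => pullSet G (Fof S) A⟩, ?_, ?_⟩
    · rw [Finset.mem_sigma]
      exact ⟨mem_TS.2 hFS, Finset.mem_pi.2 (fun A hA =>
        mem_TS.2 (isTreeFam_pullSet hG hS hFS hA))⟩
    · have hglue : glueAll (Fof S) (fun A _ => pullSet G (Fof S) A) = G :=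
        glueAll_pullSet hG hS hU hFS
      have hint : Internals (Fof S) = S := Internals_Fof hS
      exact Sigma.mk.inj_iff.2 ⟨hglue, heq_of_eq hint⟩
  · intro x hx
    rw [Finset.mem_sigma] at hx
    have hFtf : IsTreeFam x.1 := mem_TS.1 hx.1
    have hp : ∀ A (hA : A ∈ Internals x.1), IsTreeFam (x.2 A hA) := fun A hA =>
      mem_TS.1 (Finset.mem_pi.1 hx.2 A hA)
    simp only
    rw [treeEnergy_glueAll hFtf hp h]

include hk in
lemma phi_phi (h : ℕ → K) : Phi (Phi h) k = h k := by
  have step1 : ∀ F ∈ TS k, treeEnergy (Phi h) F =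
      (-1 : K) ^ (Internals F).card *
        ∑ p ∈ (Internals F).pi (fun A => TS (childCount F A)),
          ∏ A ∈ (Internals F).attach, treeEnergy h (p A.1 A.2) := by
    intro F _
    have hfac : ∀ A ∈ Internals F, Phi h (childCount F A) =
        -1 * ∑ G ∈ TS (childCount F A), treeEnergy h G := by
      intro A _
      rw [Phi_def]
      ring
    rw [treeEnergy_def]
    calc ∏ A ∈ Internals F, Phi h (childCount F A)
        = ∏ A ∈ Internals F, ((-1 : K) * ∑ G ∈ TS (childCount F A), treeEnergy h G) :=
          Finset.prod_congr rfl hfac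
      _ = (-1 : K) ^ (Internals F).card *
            ∏ A ∈ Internals F, ∑ G ∈ TS (childCount F A), treeEnergy h G := by
          rw [Finset.prod_mul_distrib, Finset.prod_const]
      _ = (-1 : K) ^ (Internals F).card *
            ∑ p ∈ (Internals F).pi (fun A => TS (childCount F A)),
              ∏ A ∈ (Internals F).attach, treeEnergy h (p A.1 A.2) := by
          rw [Finset.prod_sum]
  have claim1 : ∑ F ∈ TS k, treeEnergy (Phi h) F =
      ∑ x ∈ (TS k).sigma (fun F => (Internals F).pi (fun A => TS (childCount F A))),
        ((-1 : K) ^ (Internals x.1).card *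
          ∏ A ∈ (Internals x.1).attach, treeEnergy h (x.2 A.1 A.2)) := by
    rw [Finset.sum_sigma]
    refine Finset.sum_congr rfl fun F hF' => ?_
    dsimp only
    rw [← Finset.mul_sum]
    exact step1 F hF'
  have claim3 : ∑ y ∈ (TS k).sigma
          (fun G => (Internals G).powerset.filter (fun S => Finset.univ ∈ S)),
        ((-1 : K) ^ y.2.card * treeEnergy h y.1) = -h k := by
    rw [Finset.sum_sigma]
    have hinner : ∀ G ∈ TS k,
        ∑ S ∈ (Internals G).powerset.filter (fun S => Finset.univ ∈ S),
          ((-1 : K) ^ S.card * treeEnergy h G) =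
        (if Internals G = {Finset.univ} then (-1 : K) else 0) * treeEnergy h G := by
      intro G hG'
      rw [← Finset.sum_mul, sum_sign _ (univ_mem_Internals (mem_TS.1 hG') hk)]
    rw [Finset.sum_congr rfl hinner]
    have hsplit : ∑ G ∈ TS k,
        (if Internals G = {Finset.univ} then (-1 : K) else 0) * treeEnergy h G =
        ∑ G ∈ (TS k).filter (fun G => Internals G = {Finset.univ}), -treeEnergy h G := by
      rw [Finset.sum_filter]
      refine Finset.sum_congr rfl fun G _ => ?_
      split <;> ring
    rw [hsplit]
    have hone : (TS k).filter (fun G => Internals G = {Finset.univ}) =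
        {Fof ({Finset.univ} : Finset (Finset (Fin k)))} := by
      ext G
      rw [Finset.mem_filter, Finset.mem_singleton]
      constructor
      · rintro ⟨hG', hint⟩
        exact internals_eq_singleton_univ hk (mem_TS.1 hG') hint
      · rintro rfl
        exact ⟨mem_TS.2 (star_treeFam hk), star_internals hk⟩
    rw [hone, Finset.sum_singleton, energy_star hk h]
  have := key_sum hk h
  rw [Phi_def, claim1, this, claim3, neg_neg]

end Main

end PhiInv

/-- `Φ` is an involution on sequences `(hₖ)_{k ≥ 2}`. -/
theorem Phi_involution {K : Type*} [CommRing K] (h : ℕ → K) :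
    ∀ k : ℕ, 2 ≤ k → Phi (Phi h) k = h k := by
  intro k hk
  exact PhiInv.phi_phi hk h
end

section
/- Let N ≥ 1 and let H : ℂ^N → ℂ^N be a polynomial mapping each of whose components is homogeneous of degree δ ≥ 2, and set F = I − H (i.e., F(X) = X − H(X)). If the Jacobian determinant det(J(F)) is identically equal to 1 on ℂ^N, then the Jacobian matrix J(H) is nilpotent at every point; in fact Tr(J(H)(X)^k) = 0 for all X ∈ ℂ^N and all k ≥ 1. -/
open scoped Classical

/-- The Jacobian matrix of a polynomial mapping `H : ℂ^N → ℂ^N`, evaluated at a point. -/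
noncomputable def jacobianAt {N : ℕ} (H : Fin N → MvPolynomial (Fin N) ℂ)
    (X : Fin N → ℂ) : Matrix (Fin N) (Fin N) ℂ :=
  Matrix.of fun i j => MvPolynomial.eval X (MvPolynomial.pderiv j (H i))

open MvPolynomial in
lemma aux_pderiv {σ : Type*} [DecidableEq σ] {φ : MvPolynomial σ ℂ} {n : ℕ}
    (h : φ.IsHomogeneous n) (j : σ) : (pderiv j φ).IsHomogeneous (n - 1) := by
  have h1 : pderiv j φ = ∑ d ∈ φ.support, pderiv j (monomial d (coeff d φ)) := by
    rw [← map_sum, ← φ.as_sum]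
  rw [h1]
  apply IsHomogeneous.sum
  intro d hd
  rw [pderiv_monomial]
  by_cases hj : d j = 0
  · rw [hj, Nat.cast_zero, mul_zero, map_zero]
    exact isHomogeneous_zero _ _ _
  · apply isHomogeneous_monomial
    have hdeg : d.degree = n := by
      have := h (mem_support_iff.mp hd)
      rwa [Finsupp.degree_eq_weight_one]
    have hsplit : (d - Finsupp.single j 1) + Finsupp.single j 1 = d := by
      ext i
      rcases eq_or_ne i j with rfl | hne
      · simp [Finsupp.single_apply]; omega
      · simp [Finsupp.single_apply, hne.symm]
    have := congrArg Finsupp.degree hsplit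
    rw [show ∀ a b : σ →₀ ℕ, (a + b).degree = a.degree + b.degree from ?_] at this
    · have hs1 : (Finsupp.single j 1 : σ →₀ ℕ).degree = 1 := by
        exact Finsupp.degree_single j 1
      omega
    · intro a b
      simp only [Finsupp.degree_eq_weight_one, map_add]

open MvPolynomial in
lemma aux_eval_smul {σ : Type*} [Fintype σ] {φ : MvPolynomial σ ℂ} {n : ℕ}
    (h : φ.IsHomogeneous n) (t : ℂ) (x : σ → ℂ) :
    eval (fun j => t * x j) φ = t ^ n * eval x φ := by
  rw [eval_eq, eval_eq, Finset.mul_sum]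
  apply Finset.sum_congr rfl
  intro d hd
  have hdeg : d.degree = n := by
    have := h (mem_support_iff.mp hd)
    rwa [Finsupp.degree_eq_weight_one]
  have hprod : ∏ i ∈ d.support, (t * x i) ^ d i
      = t ^ n * ∏ i ∈ d.support, x i ^ d i := by
    simp_rw [mul_pow, Finset.prod_mul_distrib, Finset.prod_pow_eq_pow_sum]
    rw [show ∑ i ∈ d.support, d i = n from hdeg]
  rw [hprod]; ring

open MvPolynomial in
/-- if each component of `H` is homogeneous of degree `δ ≥ 2` and the Jacobian
determinant of `F = I - H` is identically `1` on `ℂ^N`, then `J(H)` is nilpotent at every point,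
and in fact all traces of powers `J(H)(X)^k`, `k ≥ 1`, vanish. -/
theorem homogeneous_constant_jacobian_nilpotent {N : ℕ} (hN : 1 ≤ N) (δ : ℕ) (hδ : 2 ≤ δ)
    (H : Fin N → MvPolynomial (Fin N) ℂ)
    (hhom : ∀ i, (H i).IsHomogeneous δ)
    (hdet : ∀ X : Fin N → ℂ,
      (jacobianAt (fun i => MvPolynomial.X i - H i) X).det = 1) :
    ∀ X : Fin N → ℂ,
      IsNilpotent (jacobianAt H X) ∧
        ∀ k : ℕ, 1 ≤ k → Matrix.trace ((jacobianAt H X) ^ k) = 0 := by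
  intro X₀
  set M := jacobianAt H X₀ with hM
  have key : ∀ s : ℂ, (1 - s • M).det = 1 := by
    intro s
    obtain ⟨t, ht⟩ := IsAlgClosed.exists_pow_nat_eq s (n := δ - 1) (by omega)
    have h2 := hdet (fun j => t * X₀ j)
    have h3 : jacobianAt (fun i => X i - H i) (fun j => t * X₀ j) = 1 - s • M := by
      ext i j
      simp only [jacobianAt, Matrix.of_apply, map_sub, Matrix.sub_apply,
        Matrix.smul_apply, Matrix.one_apply, smul_eq_mul, hM]
      rw [pderiv_X, aux_eval_smul (aux_pderiv (hhom i) j), ht]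
      rcases eq_or_ne i j with rfl | hij
      · simp
      · simp [Pi.single_apply, (Ne.symm hij : j ≠ i), hij]
    rw [h3] at h2
    exact h2
  have hcp : M.charpoly = Polynomial.X ^ N := by
    apply Polynomial.eq_of_infinite_eval_eq
    have hsub : ({(0 : ℂ)}ᶜ : Set ℂ) ⊆
        {x | Polynomial.eval x M.charpoly = Polynomial.eval x (Polynomial.X ^ N)} := by
      intro z hz
      have hz' : z ≠ 0 := hz
      have heval : M.charpoly.eval z = (z • (1 : Matrix (Fin N) (Fin N) ℂ) - M).det := by
        rw [Matrix.charpoly, ← Polynomial.coe_evalRingHom, RingHom.map_det]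
        congr 1
        ext i j
        rcases eq_or_ne i j with rfl | hij
        · simp [Matrix.charmatrix_apply_eq, Matrix.one_apply]
        · simp [Matrix.charmatrix_apply_ne _ _ _ hij, Matrix.one_apply, hij]
      have hfac : z • (1 : Matrix (Fin N) (Fin N) ℂ) - M = z • (1 - z⁻¹ • M) := by
        rw [smul_sub, smul_smul, mul_inv_cancel₀ hz', one_smul]
      show M.charpoly.eval z = _
      rw [heval, hfac, Matrix.det_smul, key, mul_one]
      simp
    exact Set.Infinite.mono hsub ((Set.finite_singleton (0 : ℂ)).infinite_compl)
  have hnil : IsNilpotent M := by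
    refine ⟨N, ?_⟩
    have h4 := Matrix.aeval_self_charpoly M
    rw [hcp] at h4
    simpa using h4
  refine ⟨hnil, fun k hk => ?_⟩
  exact (Matrix.isNilpotent_trace_of_isNilpotent
    (hnil.pow_of_pos (by omega))).eq_zero
end

section
/- Let H : ℂ^N → ℂ^N be a polynomial mapping all of whose terms have degree at least two, with coefficients H_{i,α} (so H_i(X) = ∑_{|α|≥2}(H_{i,α}/α!)X^α), and let m ≥ 1. Then the following are equivalent: (1) J(H)(X)^m = 0 for all X ∈ ℂ^N, where J(H) is the Jacobian matrix of H; (2) for all i, j ∈ {1,…,N} and all multi-indices α ∈ ℤ_{≥0}^N, ∑_{T ∈ Fern_{i,α,j}(m)} E_H(T) = 0, where Fern_{i,α,j}(m) is the set of typed, leaf-labelled ferns of length m with root type i, spine-end type j, and non-spine leaves labelled by [α], and E_H(T) = ∏_{v internal} H_{τ(v),μ(v)}. -/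
open scoped Classical

/-- The exponential-normalization coefficients `H_{i,β} = β! · coeff_β(H_i)` of a polynomial
mapping, so that `H_i = ∑_β (H_{i,β}/β!) X^β`. -/
noncomputable def expCoeff {N : ℕ} (H : Fin N → MvPolynomial (Fin N) ℂ)
    (i : Fin N) (β : Fin N →₀ ℕ) : ℂ :=
  (β.prod fun _ n => (n.factorial : ℂ)) * MvPolynomial.coeff β (H i)

/-- The fern sum `∑_{T ∈ Fern_{i,α,j}(m)} E_H(T)`.  A typed leaf-labelled fern of length `m`
with root type `i` and spine-end type `j` is faithfully encoded by the types
`κ 0 = i, κ 1, …, κ m = j` of its spine vertices together with the assignment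
`φ : [α] → {1,…,m}` attaching each non-spine leaf (labelled by `[α] = {(t,a) : a ≤ α_t}`,
with type `t`) to its parent spine vertex.  Its energy is
`∏_{l=1}^m H_{κ(l-1), e_{κ(l)} + #S_l}` where `S_l` is the multi-index of types of the leaf
children of the `(l-1)`-st spine vertex. -/
noncomputable def fernSum {N : ℕ} (H : Fin N → MvPolynomial (Fin N) ℂ)
    (m : ℕ) (i j : Fin N) (α : Fin N →₀ ℕ) : ℂ :=
  ∑ κ ∈ (Finset.univ : Finset (Fin (m + 1) → Fin N)).filter
      (fun κ => κ 0 = i ∧ κ (Fin.last m) = j),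
    ∑ φ : (Σ t : Fin N, Fin (α t)) → Fin m,
      ∏ l : Fin m,
        expCoeff H (κ l.castSucc)
          (Finsupp.single (κ l.succ) 1 +
            Finsupp.equivFunOnFinite.symm fun t : Fin N =>
              (Finset.univ.filter
                (fun x : Σ t : Fin N, Fin (α t) => φ x = l ∧ x.1 = t)).card)

lemma my_coeff_pderiv {σ R : Type*} [CommSemiring R] (j : σ) (S : σ →₀ ℕ)
    (q : MvPolynomial σ R) :
    MvPolynomial.coeff S (MvPolynomial.pderiv j q)
      = ((S j + 1 : ℕ) : R) * MvPolynomial.coeff (S + Finsupp.single j 1) q := by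
  classical
  induction q using MvPolynomial.induction_on' with
  | add p q hp hq => simp [hp, hq, mul_add]
  | monomial s a =>
    rw [MvPolynomial.pderiv_monomial, MvPolynomial.coeff_monomial, MvPolynomial.coeff_monomial]
    by_cases h : s = S + Finsupp.single j 1
    · subst h
      have h1 : (S + Finsupp.single j 1) - Finsupp.single j 1 = S := by
        simp
      have h2 : ((S + Finsupp.single j 1 : σ →₀ ℕ)) j = S j + 1 := by simp
      rw [if_pos h1, if_pos rfl, h2]
      push_cast
      ring
    · rw [if_neg h]
      by_cases h2 : s - Finsupp.single j 1 = S
      · have hsj : s j = 0 := by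
          by_contra hsj
          apply h
          have hle : Finsupp.single j 1 ≤ s := by
            rw [Finsupp.single_le_iff]; omega
          rw [← h2]
          exact (tsub_add_cancel_of_le hle).symm
        simp [h2, hsj]
      · simp [h2]

/-- `S! = ∏ t (S t)!` as a complex number. -/
noncomputable def ffact {N : ℕ} (S : Fin N →₀ ℕ) : ℂ :=
  S.prod fun _ k => (k.factorial : ℂ)

lemma ffact_eq_prod {N : ℕ} (S : Fin N →₀ ℕ) :
    ffact S = ∏ t, ((S t).factorial : ℂ) :=
  Finsupp.prod_fintype _ _ (fun _ => by simp)

lemma ffact_add_single {N : ℕ} (S : Fin N →₀ ℕ) (j : Fin N) :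
    ffact (S + Finsupp.single j 1) = ((S j + 1 : ℕ) : ℂ) * ffact S := by
  classical
  rw [ffact_eq_prod, ffact_eq_prod]
  rw [← Finset.prod_erase_mul _ _ (Finset.mem_univ j),
    ← Finset.prod_erase_mul _ _ (Finset.mem_univ j)]
  have h1 : ∀ t ∈ Finset.univ.erase j,
      (((S + Finsupp.single j 1 : Fin N →₀ ℕ) t).factorial : ℂ) = ((S t).factorial : ℂ) := by
    intro t ht
    rw [Finset.mem_erase] at ht
    simp [Finsupp.single_apply, Ne.symm ht.1]
  rw [Finset.prod_congr rfl h1]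
  have h2 : ((S + Finsupp.single j 1 : Fin N →₀ ℕ)) j = S j + 1 := by simp
  rw [h2, Nat.factorial_succ]
  push_cast
  ring

lemma my_pderiv_prod {σ R ι : Type*} [CommSemiring R] [DecidableEq ι] (j : σ)
    (s : Finset ι) (p : ι → MvPolynomial σ R) :
    MvPolynomial.pderiv j (∏ i ∈ s, p i) =
      ∑ i ∈ s, MvPolynomial.pderiv j (p i) * ∏ k ∈ s.erase i, p k := by
  induction s using Finset.induction_on with
  | empty => simp
  | insert a s ha ih =>
    rw [Finset.prod_insert ha, MvPolynomial.pderiv_mul, ih, Finset.sum_insert ha,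
      Finset.erase_insert ha, Finset.mul_sum]
    congr 1
    apply Finset.sum_congr rfl
    intro i hi
    rw [Finset.erase_insert_of_ne (fun h : a = i => ha (h ▸ hi)),
      Finset.prod_insert (fun h => ha (Finset.mem_of_mem_erase h))]
    ring

/-- The basic factor identity: `(S + e_j)! coeff_{S+e_j} q = S! coeff_S (∂_j q)`. -/
lemma ffact_coeff_pderiv {N : ℕ} (S : Fin N →₀ ℕ) (j : Fin N) (q : MvPolynomial (Fin N) ℂ) :
    ffact S * MvPolynomial.coeff S (MvPolynomial.pderiv j q)
      = ffact (S + Finsupp.single j 1) * MvPolynomial.coeff (S + Finsupp.single j 1) q := by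
  rw [my_coeff_pderiv, ffact_add_single]
  ring

/-- The multi-index of types of leaves attached by `φ` to spine position `l`. -/
noncomputable def cntf {N n m : ℕ} (τ : Fin n → Fin N) (φ : Fin n → Fin m) (l : Fin m) :
    Fin N →₀ ℕ :=
  Finsupp.equivFunOnFinite.symm fun t => (Finset.univ.filter fun a => φ a = l ∧ τ a = t).card

/-- The multi-index of types of all leaves. -/
noncomputable def cnt {N n : ℕ} (τ : Fin n → Fin N) : Fin N →₀ ℕ :=
  Finsupp.equivFunOnFinite.symm fun t => (Finset.univ.filter fun a => τ a = t).card

lemma cntf_apply {N n m : ℕ} (τ : Fin n → Fin N) (φ : Fin n → Fin m) (l : Fin m) (t : Fin N) :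
    cntf τ φ l t = (Finset.univ.filter fun a => φ a = l ∧ τ a = t).card := rfl

lemma cnt_apply {N n : ℕ} (τ : Fin n → Fin N) (t : Fin N) :
    cnt τ t = (Finset.univ.filter fun a => τ a = t).card := rfl

lemma cntf_cons {N n m : ℕ} (τ : Fin (n + 1) → Fin N) (l₀ : Fin m) (φ' : Fin n → Fin m)
    (l : Fin m) :
    cntf τ (Fin.cons l₀ φ') l =
      cntf (τ ∘ Fin.succ) φ' l + (if l = l₀ then Finsupp.single (τ 0) 1 else 0) := by
  classical
  ext t
  rw [Finsupp.add_apply, cntf_apply, cntf_apply, Finset.card_filter, Finset.card_filter,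
    Fin.sum_univ_succ]
  simp only [Fin.cons_zero, Fin.cons_succ, Function.comp_apply]
  have h1 : ((if l = l₀ then Finsupp.single (τ 0) 1 else 0) : Fin N →₀ ℕ) t
      = if l₀ = l ∧ τ 0 = t then 1 else 0 := by
    by_cases hl : l = l₀
    · by_cases ht : τ 0 = t <;> simp [hl, ht, Finsupp.single_apply]
    · simp [hl, Ne.symm hl]
  rw [h1, add_comm]

lemma cnt_succ {N n : ℕ} (τ : Fin (n + 1) → Fin N) :
    cnt τ = cnt (τ ∘ Fin.succ) + Finsupp.single (τ 0) 1 := by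
  classical
  ext t
  rw [Finsupp.add_apply, cnt_apply, cnt_apply, Finset.card_filter, Finset.card_filter,
    Fin.sum_univ_succ]
  simp only [Function.comp_apply]
  by_cases ht : τ 0 = t <;> simp [ht, Finsupp.single_apply, add_comm]

/-- The key combinatorial identity. -/
lemma key {N : ℕ} (n : ℕ) (τ : Fin n → Fin N) (m : ℕ) (p : Fin m → MvPolynomial (Fin N) ℂ) :
    (∑ φ : Fin n → Fin m, ∏ l : Fin m,
        ffact (cntf τ φ l) * MvPolynomial.coeff (cntf τ φ l) (p l))
      = ffact (cnt τ) * MvPolynomial.coeff (cnt τ) (∏ l, p l) := by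
  classical
  induction n generalizing p with
  | zero =>
    have hc : ∀ (φ : Fin 0 → Fin m) (l : Fin m), cntf τ φ l = 0 := by
      intro φ l; ext t; simp [cntf_apply]
    have hτ : cnt τ = 0 := by ext t; simp [cnt_apply]
    have hu : ∀ q : MvPolynomial (Fin N) ℂ,
        MvPolynomial.coeff 0 q = MvPolynomial.constantCoeff q := by
      intro q; rw [MvPolynomial.constantCoeff_eq]
    rw [Fintype.sum_unique]
    simp only [hc, hτ, hu, map_prod]
    simp [ffact]
  | succ n ih =>
    rw [← Equiv.sum_comp (Fin.consEquiv fun _ : Fin (n + 1) => Fin m), Fintype.sum_prod_type]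
    have hterm : ∀ (l₀ : Fin m) (φ' : Fin n → Fin m),
        (∏ l : Fin m, ffact (cntf τ ((Fin.consEquiv fun _ : Fin (n+1) => Fin m) (l₀, φ')) l) *
          MvPolynomial.coeff (cntf τ ((Fin.consEquiv fun _ : Fin (n+1) => Fin m) (l₀, φ')) l)
            (p l))
        = ∏ l : Fin m, ffact (cntf (τ ∘ Fin.succ) φ' l) *
            MvPolynomial.coeff (cntf (τ ∘ Fin.succ) φ' l)
              (Function.update p l₀ (MvPolynomial.pderiv (τ 0) (p l₀)) l) := by
      intro l₀ φ'
      have he : (Fin.consEquiv fun _ : Fin (n+1) => Fin m) (l₀, φ') = Fin.cons l₀ φ' := rfl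
      rw [he]
      refine Finset.prod_congr rfl fun l _ => ?_
      rw [cntf_cons]
      by_cases hl : l = l₀
      · subst hl
        rw [if_pos rfl, Function.update_self]
        exact (ffact_coeff_pderiv _ _ _).symm
      · rw [if_neg hl, add_zero, Function.update_of_ne hl]
    simp only [hterm]
    have hih : ∀ l₀ : Fin m,
        (∑ φ' : Fin n → Fin m, ∏ l : Fin m, ffact (cntf (τ ∘ Fin.succ) φ' l) *
            MvPolynomial.coeff (cntf (τ ∘ Fin.succ) φ' l)
              (Function.update p l₀ (MvPolynomial.pderiv (τ 0) (p l₀)) l))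
        = ffact (cnt (τ ∘ Fin.succ)) * MvPolynomial.coeff (cnt (τ ∘ Fin.succ))
            (∏ l, Function.update p l₀ (MvPolynomial.pderiv (τ 0) (p l₀)) l) :=
      fun l₀ => ih (τ ∘ Fin.succ) _
    rw [Finset.sum_congr rfl fun l₀ _ => hih l₀, ← Finset.mul_sum, ← MvPolynomial.coeff_sum]
    have hprod : (∑ l₀ : Fin m, ∏ l, Function.update p l₀ (MvPolynomial.pderiv (τ 0) (p l₀)) l)
        = MvPolynomial.pderiv (τ 0) (∏ l, p l) := by
      rw [my_pderiv_prod]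
      refine Finset.sum_congr rfl fun l₀ _ => ?_
      rw [Finset.prod_update_of_mem (Finset.mem_univ l₀), Finset.sdiff_singleton_eq_erase]
    rw [hprod, ffact_coeff_pderiv, ← cnt_succ]

/-- Entries of matrix powers as sums over paths. -/
lemma pow_entry {R : Type*} [CommSemiring R] {N : ℕ} (M : Matrix (Fin N) (Fin N) R) :
    ∀ (m : ℕ) (i j : Fin N),
    (M ^ m) i j = ∑ κ ∈ (Finset.univ : Finset (Fin (m + 1) → Fin N)).filter
      (fun κ => κ 0 = i ∧ κ (Fin.last m) = j),
      ∏ l : Fin m, M (κ l.castSucc) (κ l.succ) := by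
  intro m
  induction m with
  | zero =>
    intro i j
    rw [pow_zero, Finset.sum_filter,
      ← Equiv.sum_comp (Equiv.funUnique (Fin 1) (Fin N)).symm]
    by_cases hij : i = j
    · subst hij
      simp [Matrix.one_apply, Equiv.funUnique]
    · have he : (Finset.univ.filter fun x : Fin N => x = i ∧ x = j) = ∅ := by
        rw [Finset.filter_eq_empty_iff]
        rintro x - ⟨rfl, rfl⟩
        exact hij rfl
      simp [Matrix.one_apply, Equiv.funUnique, hij, he]
  | succ m ih =>
    intro i j
    rw [pow_succ, Matrix.mul_apply]
    simp only [ih, Finset.sum_mul]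
    rw [Finset.sum_sigma']
    refine Finset.sum_bij' (fun (x : Σ _ : Fin N, Fin (m + 1) → Fin N) _ =>
        (Fin.snoc x.2 j : Fin (m + 2) → Fin N))
      (fun κ _ => ⟨κ ((Fin.last m).castSucc), Fin.init κ⟩) ?_ ?_ ?_ ?_ ?_
    · rintro ⟨k, κ'⟩ hk
      simp only [Finset.mem_sigma, Finset.mem_filter, Finset.mem_univ, true_and] at hk ⊢
      refine ⟨?_, Fin.snoc_last _ _⟩
      rw [show (0 : Fin (m + 2)) = Fin.castSucc 0 from rfl, Fin.snoc_castSucc]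
      exact hk.1
    · intro κ hκ
      simp only [Finset.mem_filter, Finset.mem_univ, true_and] at hκ
      simp only [Finset.mem_sigma, Finset.mem_filter, Finset.mem_univ, true_and]
      constructor
      · show κ (Fin.castSucc 0) = i
        rw [Fin.castSucc_zero]
        exact hκ.1
      · rfl
    · rintro ⟨k, κ'⟩ hk
      simp only [Finset.mem_sigma, Finset.mem_filter, Finset.mem_univ, true_and] at hk
      dsimp only
      rw [Fin.snoc_castSucc, Fin.init_snoc, hk.2]
    · intro κ hκ
      simp only [Finset.mem_filter, Finset.mem_univ, true_and] at hκ
      dsimp only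
      rw [← hκ.2]
      exact Fin.snoc_init_self κ
    · rintro ⟨k, κ'⟩ hk
      simp only [Finset.mem_sigma, Finset.mem_filter, Finset.mem_univ, true_and] at hk
      dsimp only
      rw [Fin.prod_univ_castSucc]
      congr 1
      · refine Finset.prod_congr rfl fun l _ => ?_
        rw [Fin.succ_castSucc, Fin.snoc_castSucc, Fin.snoc_castSucc]
      · rw [Fin.succ_last, Fin.snoc_last, Fin.snoc_castSucc, hk.2]

lemma card_filter_equiv {α β : Type*} [Fintype α] [Fintype β] (e : α ≃ β)
    (P : α → Prop) (Q : β → Prop) [DecidablePred P] [DecidablePred Q]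
    (h : ∀ a, P a ↔ Q (e a)) :
    (Finset.univ.filter P).card = (Finset.univ.filter Q).card := by
  classical
  rw [← Fintype.card_subtype, ← Fintype.card_subtype]
  exact Fintype.card_congr (e.subtypeEquiv fun a => h a)


/-- The Jacobian matrix as a matrix of polynomials. -/
noncomputable def Pmat {N : ℕ} (H : Fin N → MvPolynomial (Fin N) ℂ) :
    Matrix (Fin N) (Fin N) (MvPolynomial (Fin N) ℂ) :=
  Matrix.of fun i j => MvPolynomial.pderiv j (H i)

lemma expCoeff'_eq {N : ℕ} (H : Fin N → MvPolynomial (Fin N) ℂ) (i j : Fin N)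
    (S : Fin N →₀ ℕ) :
    expCoeff H i (Finsupp.single j 1 + S)
      = ffact S * MvPolynomial.coeff S (MvPolynomial.pderiv j (H i)) := by
  show ffact (Finsupp.single j 1 + S) * MvPolynomial.coeff (Finsupp.single j 1 + S) (H i) = _
  rw [add_comm (Finsupp.single j 1) S, ← ffact_coeff_pderiv]

lemma fernSum_eq {N : ℕ} (H : Fin N → MvPolynomial (Fin N) ℂ) (m : ℕ) (i j : Fin N)
    (α : Fin N →₀ ℕ) :
    fernSum H m i j α = ffact α * MvPolynomial.coeff α ((Pmat H ^ m) i j) := by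
  classical
  rw [pow_entry (Pmat H) m i j, MvPolynomial.coeff_sum, Finset.mul_sum]
  simp only [Pmat, Matrix.of_apply]
  rw [fernSum]
  refine Finset.sum_congr rfl fun κ _ => ?_
  -- set up the leaf-relabelling equivalence
  set L := (Σ t : Fin N, Fin (α t)) with hL
  set e : L ≃ Fin (Fintype.card L) := Fintype.equivFin L with he
  set τ : Fin (Fintype.card L) → Fin N := fun a => (e.symm a).1 with hτ
  have hα : cnt τ = α := by
    ext t
    rw [cnt_apply]
    have h1 : (Finset.univ.filter fun x : L => x.1 = t).card
        = (Finset.univ.filter fun a => τ a = t).card :=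
      card_filter_equiv e _ _ (fun x => by simp [hτ])
    rw [← h1, ← Fintype.card_subtype]
    have e2 : {x : L // x.1 = t} ≃ Fin (α t) :=
      { toFun := fun x => Fin.cast (congrArg (fun u => α u) x.2) x.1.2
        invFun := fun a => ⟨⟨t, a⟩, rfl⟩
        left_inv := by rintro ⟨⟨t', a⟩, rfl⟩; rfl
        right_inv := fun a => rfl }
    rw [Fintype.card_congr e2, Fintype.card_fin]
  have hcnt : ∀ (ψ : Fin (Fintype.card L) → Fin m) (l : Fin m),
      (Finsupp.equivFunOnFinite.symm fun t : Fin N =>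
        (Finset.univ.filter (fun x : L => (ψ ∘ e) x = l ∧ x.1 = t)).card) = cntf τ ψ l := by
    intro ψ l
    ext t
    show (Finset.univ.filter (fun x : L => (ψ ∘ e) x = l ∧ x.1 = t)).card = cntf τ ψ l t
    rw [cntf_apply]
    exact card_filter_equiv e _ _ (fun x => by simp [hτ])
  have hsum : ∀ F : (L → Fin m) → ℂ,
      (∑ φ : L → Fin m, F φ) = ∑ ψ : Fin (Fintype.card L) → Fin m, F (ψ ∘ e) := by
    intro F
    exact (Equiv.sum_comp (Equiv.arrowCongr e (Equiv.refl (Fin m))).symm F).symm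
  have step1 : (∑ φ : L → Fin m, ∏ l : Fin m,
      expCoeff H (κ l.castSucc)
        (Finsupp.single (κ l.succ) 1 +
          Finsupp.equivFunOnFinite.symm fun t : Fin N =>
            (Finset.univ.filter (fun x : L => φ x = l ∧ x.1 = t)).card))
      = ∑ ψ : Fin (Fintype.card L) → Fin m, ∏ l : Fin m,
          ffact (cntf τ ψ l) * MvPolynomial.coeff (cntf τ ψ l)
            (MvPolynomial.pderiv (κ l.succ) (H (κ l.castSucc))) := by
    refine (hsum _).trans ?_
    refine Finset.sum_congr rfl fun ψ _ => ?_
    refine Finset.prod_congr rfl fun l _ => ?_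
    rw [hcnt ψ l]
    exact expCoeff'_eq H _ _ _
  rw [step1, key (Fintype.card L) τ m
    (fun l => MvPolynomial.pderiv (κ l.succ) (H (κ l.castSucc))), hα]

lemma ffact_ne_zero {N : ℕ} (α : Fin N →₀ ℕ) : ffact α ≠ 0 := by
  rw [ffact_eq_prod]
  refine Finset.prod_ne_zero_iff.mpr fun t _ => ?_
  exact_mod_cast Nat.cast_ne_zero.mpr (Nat.factorial_ne_zero _)

/-- the fern lemma: for a polynomial mapping `H` all of whose terms have degree
at least two, `J(H)(X)^m = 0` for all `X ∈ ℂ^N` if and only if all fern sums of length `m`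
vanish. -/
theorem fern_lemma {N : ℕ} (m : ℕ) (hm : 1 ≤ m)
    (H : Fin N → MvPolynomial (Fin N) ℂ)
    (hH : ∀ i (β : Fin N →₀ ℕ), (β.sum fun _ n => n) < 2 → MvPolynomial.coeff β (H i) = 0) :
    (∀ X : Fin N → ℂ, (jacobianAt H X) ^ m = 0) ↔
      (∀ i j : Fin N, ∀ α : Fin N →₀ ℕ, fernSum H m i j α = 0) := by
  have hmap : ∀ X : Fin N → ℂ, (jacobianAt H X) ^ m
      = ((Pmat H) ^ m).map (MvPolynomial.eval X) := by
    intro X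
    have h1 : jacobianAt H X
        = (MvPolynomial.eval X : MvPolynomial (Fin N) ℂ →+* ℂ).mapMatrix (Pmat H) := rfl
    rw [h1, ← map_pow]
    rfl
  constructor
  · intro h i j α
    rw [fernSum_eq]
    have hpoly : ((Pmat H) ^ m) i j = 0 := by
      apply MvPolynomial.funext
      intro x
      have h2 := congrFun (congrFun ((hmap x).symm.trans (h x)) i) j
      simpa [Matrix.map_apply] using h2
    rw [hpoly, MvPolynomial.coeff_zero, mul_zero]
  · intro h X
    have hpoly : ∀ i j, ((Pmat H) ^ m) i j = 0 := by
      intro i j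
      apply MvPolynomial.ext
      intro α
      have h2 := h i j α
      rw [fernSum_eq] at h2
      have h3 := (mul_eq_zero.mp h2).resolve_left (ffact_ne_zero α)
      rw [h3, MvPolynomial.coeff_zero]
    rw [hmap X]
    ext i j
    rw [Matrix.map_apply, hpoly i j]
    simp
end
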